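/- Let R be a rooted binary tree-child network on X with |X| ≥ 2, where cherry and reticulated-cherry reductions are performed. If (R = R_0, R_1, ..., R_k) is any maximal cherry-reduction sequence for R, then R_k is a single vertex, and the unique cherry-picking sequence associated with it is tree-child; consequently tree-childness of R can be certified by computing any single maximal cherry-reduction sequence. -/
import Mathlib


/-!  Formalisation preliminaries for rooted and unrooted binary phylogenetic
networks, cherry reductions, cherry-reduction sequences and cherry-picking
sequences, following Döcker & Linz. -/

/-- A finite directed graph whose vertices are natural numbers. -/
structure DNet where
  verts : Finset ℕ
  arcs : Finset (ℕ × ℕ)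

namespace DNet

/-- in-degree of a vertex -/
def inDeg (N : DNet) (v : ℕ) : ℕ := (N.arcs.filter (fun p => p.2 = v)).card

/-- out-degree of a vertex -/
def outDeg (N : DNet) (v : ℕ) : ℕ := (N.arcs.filter (fun p => p.1 = v)).card

/-- the arc relation -/
def Arc (N : DNet) (u v : ℕ) : Prop := (u, v) ∈ N.arcs

/-- the digraph has no directed cycle -/
def Acyclic (N : DNet) : Prop := ∀ v, ¬ Relation.TransGen N.Arc v v

/-- root: in-degree 0 and out-degree 2 -/
def IsRoot (N : DNet) (v : ℕ) : Prop := v ∈ N.verts ∧ N.inDeg v = 0 ∧ N.outDeg v = 2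

/-- leaf: in-degree 1 and out-degree 0 -/
def IsLeaf (N : DNet) (v : ℕ) : Prop := v ∈ N.verts ∧ N.inDeg v = 1 ∧ N.outDeg v = 0

/-- tree vertex: in-degree 1 and out-degree 2 -/
def IsTreeVertex (N : DNet) (v : ℕ) : Prop := v ∈ N.verts ∧ N.inDeg v = 1 ∧ N.outDeg v = 2

/-- reticulation: in-degree 2 and out-degree 1 -/
def IsRet (N : DNet) (v : ℕ) : Prop := v ∈ N.verts ∧ N.inDeg v = 2 ∧ N.outDeg v = 1

/-- the network consists of a single vertex -/
def SingleVertex (N : DNet) : Prop := N.verts.card = 1 ∧ N.arcs = ∅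

/-- the reticulation number of a rooted network: number of in-degree-2 vertices -/
def retNum (N : DNet) : ℕ := (N.verts.filter (fun v => N.inDeg v = 2)).card

/-- tree-child: every vertex with a child has a child that is a tree vertex or a leaf -/
def TreeChild (N : DNet) : Prop :=
  ∀ v ∈ N.verts, N.outDeg v ≠ 0 → ∃ c, (v, c) ∈ N.arcs ∧ (N.IsTreeVertex c ∨ N.IsLeaf c)

/-- a stack: two reticulations joined by an arc -/
def HasStack (N : DNet) : Prop := ∃ u v, N.IsRet u ∧ N.IsRet v ∧ (u, v) ∈ N.arcs

/-- a pair of sibling reticulations: two reticulations with a common parent -/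
def HasSiblingRets (N : DNet) : Prop :=
  ∃ p u v, u ≠ v ∧ N.IsRet u ∧ N.IsRet v ∧ (p, u) ∈ N.arcs ∧ (p, v) ∈ N.arcs

/-- stack-free -/
def StackFree (N : DNet) : Prop := ¬ N.HasStack

end DNet

/-- `N` is a rooted binary phylogenetic network with leaf set `X`
(including the degenerate single-vertex network when `|X| = 1`). -/
def IsRootedBinaryNet (N : DNet) (X : Finset ℕ) : Prop :=
  (∃ x, X = {x} ∧ N.verts = {x} ∧ N.arcs = ∅) ∨
  ((∀ p ∈ N.arcs, p.1 ∈ N.verts ∧ p.2 ∈ N.verts) ∧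
   (∀ p ∈ N.arcs, p.1 ≠ p.2) ∧
   N.Acyclic ∧
   (∃! ρ, ρ ∈ N.verts ∧ N.inDeg ρ = 0) ∧
   (∀ v ∈ N.verts, N.IsRoot v ∨ N.IsLeaf v ∨ N.IsTreeVertex v ∨ N.IsRet v) ∧
   (∀ v, N.IsLeaf v ↔ v ∈ X))

/-- `[a,b]` is a cherry of the rooted network `N` (with `a` the leaf to be deleted). -/
def RCherry (N : DNet) (a b : ℕ) : Prop :=
  a ≠ b ∧ N.IsLeaf a ∧ N.IsLeaf b ∧ ∃ p, (p, a) ∈ N.arcs ∧ (p, b) ∈ N.arcs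

/-- `(a,b)` is a reticulated cherry of the rooted network `N` with reticulation leaf `a`:
the parent of `a` is a reticulation and receives an arc from the parent of `b`. -/
def RRetCherry (N : DNet) (a b : ℕ) : Prop :=
  a ≠ b ∧ N.IsLeaf a ∧ N.IsLeaf b ∧
  ∃ pa pb, (pa, a) ∈ N.arcs ∧ (pb, b) ∈ N.arcs ∧ N.IsRet pa ∧ (pb, pa) ∈ N.arcs

/-- `M` is obtained from the rooted network `N` by reducing the cherry `[a,b]`:
delete `a` and suppress (or, if it is the root, delete) the resulting degree-2 vertex. -/
def RReduceCherry (N M : DNet) (a b : ℕ) : Prop :=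
  RCherry N a b ∧
  ∃ p, (p, a) ∈ N.arcs ∧ (p, b) ∈ N.arcs ∧
    ((N.inDeg p = 0 ∧ M.verts = N.verts \ {a, p} ∧ M.arcs = N.arcs \ {(p, a), (p, b)}) ∨
     (∃ g, (g, p) ∈ N.arcs ∧ M.verts = N.verts \ {a, p} ∧
        M.arcs = insert (g, b) (N.arcs \ {(g, p), (p, a), (p, b)})))

/-- `M` is obtained from the rooted network `N` by reducing the reticulated cherry `(a,b)`
with reticulation leaf `a`: delete the reticulation arc `(p_b, p_a)` and suppress the two
resulting degree-2 vertices. -/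
def RReduceRetCherry (N M : DNet) (a b : ℕ) : Prop :=
  RRetCherry N a b ∧
  ∃ pa pb qa qb, (pa, a) ∈ N.arcs ∧ (pb, b) ∈ N.arcs ∧ N.IsRet pa ∧ (pb, pa) ∈ N.arcs ∧
    (qa, pa) ∈ N.arcs ∧ qa ≠ pb ∧ (qb, pb) ∈ N.arcs ∧
    M.verts = N.verts \ {pa, pb} ∧
    M.arcs = insert (qa, a) (insert (qb, b)
      (N.arcs \ {(pb, pa), (pa, a), (qa, pa), (pb, b), (qb, pb)}))

/-- A recorded reduction: either a cherry pair `[x,y]` or a reticulated-cherry pair `(x,y)`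
(the deleted leaf, resp. the reticulation leaf, is listed first). -/
inductive Pick where
  | cherry (x y : ℕ)
  | ret (x y : ℕ)
deriving DecidableEq

namespace Pick

/-- first coordinate -/
def fst : Pick → ℕ
  | cherry x _ => x
  | ret x _ => x

/-- second coordinate -/
def snd : Pick → ℕ
  | cherry _ y => y
  | ret _ y => y

/-- the pair contains the element `z` -/
def Contains (r : Pick) (z : ℕ) : Prop := r.fst = z ∨ r.snd = z

/-- the pair is a reticulated-cherry pair -/
def IsRetPair : Pick → Prop
  | cherry _ _ => False
  | ret _ _ => True

/-- the pair is a cherry pair -/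
def IsCherryPair : Pick → Prop
  | cherry _ _ => True
  | ret _ _ => False

end Pick

/-- The step from `N` to `M` is the cherry reduction recorded by the pick `r`
(rooted version). -/
def RStep (N M : DNet) : Pick → Prop
  | .cherry x y => RReduceCherry N M x y
  | .ret x y => RReduceRetCherry N M x y

/-- `(Ns 0, …, Ns k)` is a cherry-reduction sequence of rooted networks whose associated
cherry-picking sequence is `(rs 0, …, rs (k-1))`. -/
def RCherrySeq (Ns : ℕ → DNet) (rs : ℕ → Pick) (k : ℕ) : Prop :=
  ∀ i < k, RStep (Ns i) (Ns (i + 1)) (rs i)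

/-- `(Ns 0, …, Ns k)` is a cherry-reduction sequence of rooted networks. -/
def RReductionSeq (Ns : ℕ → DNet) (k : ℕ) : Prop :=
  ∀ i < k, ∃ r, RStep (Ns i) (Ns (i + 1)) r

/-- `R` is a rooted orchard network: it admits a complete cherry-reduction sequence. -/
def Orchard (R : DNet) : Prop :=
  ∃ Ns k, Ns 0 = R ∧ RReductionSeq Ns k ∧ (Ns k).SingleVertex

/-- `j = s(i)`: the smallest index `j > i` (within the sequence of length `k`) such that
`rs j` contains the first coordinate of `rs i`. -/
def SuccAt (rs : ℕ → Pick) (k i j : ℕ) : Prop :=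
  i < j ∧ j < k ∧ (rs j).Contains (rs i).fst ∧
  ∀ l, i < l → l < j → ¬ (rs l).Contains (rs i).fst

/-- Property (P1): the successor pair of every reticulated-cherry pair, if it exists,
is a cherry pair. -/
def SeqP1 (rs : ℕ → Pick) (k : ℕ) : Prop :=
  ∀ i j, (rs i).IsRetPair → SuccAt rs k i j → (rs j).IsCherryPair

/-- Property (P2): no element of the sequence is the successor pair of two distinct
reticulated-cherry pairs. -/
def SeqP2 (rs : ℕ → Pick) (k : ℕ) : Prop :=
  ∀ i i' j, i ≠ i' → (rs i).IsRetPair → (rs i').IsRetPair →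
    SuccAt rs k i j → SuccAt rs k i' j → False

/-- A tree-child cherry-picking sequence: one satisfying (P1) and (P2). -/
def TreeChildSeq (rs : ℕ → Pick) (k : ℕ) : Prop := SeqP1 rs k ∧ SeqP2 rs k

/-- Property (P3): the first coordinate of each pair does not occur as the second
coordinate of any later pair. -/
def SeqP3 (rs : ℕ → Pick) (k : ℕ) : Prop :=
  ∀ i j, i < j → j < k → (rs i).fst ≠ (rs j).snd

/-- A finite undirected graph whose vertices are natural numbers. -/
structure UNet where
  verts : Finset ℕ
  edges : Finset (Sym2 ℕ)

namespace UNet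

/-- degree of a vertex -/
def deg (U : UNet) (v : ℕ) : ℕ := (U.edges.filter (fun e => v ∈ e)).card

/-- adjacency -/
def Adj (U : UNet) (u v : ℕ) : Prop := u ≠ v ∧ s(u, v) ∈ U.edges

/-- connectedness -/
def Connected (U : UNet) : Prop :=
  ∀ u ∈ U.verts, ∀ v ∈ U.verts, Relation.ReflTransGen U.Adj u v

/-- leaf: degree-1 vertex -/
def IsLeaf (U : UNet) (v : ℕ) : Prop := v ∈ U.verts ∧ U.deg v = 1

/-- the network consists of a single vertex -/
def SingleVertex (U : UNet) : Prop := U.verts.card = 1 ∧ U.edges = ∅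

/-- the reticulation number of an unrooted network: `|E| - (|V| - 1)` -/
def retNum (U : UNet) : ℕ := U.edges.card - (U.verts.card - 1)

end UNet

/-- `U` is an unrooted binary phylogenetic network with leaf set `X`
(including the degenerate single-vertex network when `|X| = 1`). -/
def IsUnrootedBinaryNet (U : UNet) (X : Finset ℕ) : Prop :=
  (∃ x, X = {x} ∧ U.verts = {x} ∧ U.edges = ∅) ∨
  ((∀ e ∈ U.edges, ¬ e.IsDiag ∧ ∀ v ∈ e, v ∈ U.verts) ∧
   U.Connected ∧
   (∀ v ∈ U.verts, U.deg v = 1 ∨ U.deg v = 3) ∧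
   (∀ v, U.IsLeaf v ↔ v ∈ X))

/-- `[a,b]` is a cherry of the unrooted network `U`. -/
def UCherry (U : UNet) (a b : ℕ) : Prop :=
  a ≠ b ∧ U.IsLeaf a ∧ U.IsLeaf b ∧
  ((∃ p, s(a, p) ∈ U.edges ∧ s(b, p) ∈ U.edges ∧ p ≠ a ∧ p ≠ b) ∨ U.edges = {s(a, b)})

/-- the edge `{u,v}` lies on a cycle of `U` -/
def UOnCycle (U : UNet) (u v : ℕ) : Prop :=
  s(u, v) ∈ U.edges ∧
  Relation.ReflTransGen (fun x y => x ≠ y ∧ s(x, y) ∈ U.edges ∧ s(x, y) ≠ s(u, v)) u v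

/-- `(a,b)` is a reticulated cherry of the unrooted network `U` with reticulation
edge `{u,v}`. -/
def URetCherry (U : UNet) (a b : ℕ) : Prop :=
  a ≠ b ∧ U.IsLeaf a ∧ U.IsLeaf b ∧
  ∃ u v, s(a, u) ∈ U.edges ∧ s(u, v) ∈ U.edges ∧ s(v, b) ∈ U.edges ∧
    u ≠ v ∧ u ≠ a ∧ v ≠ b ∧ UOnCycle U u v

/-- `W` is obtained from `U` by reducing the cherry `[a,b]`: delete `a` and, if `U` has
at least two edges, suppress the resulting degree-2 vertex. -/
def UReduceCherry (U W : UNet) (a b : ℕ) : Prop :=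
  UCherry U a b ∧
  ((U.edges = {s(a, b)} ∧ W.verts = U.verts \ {a} ∧ W.edges = ∅) ∨
   (∃ p g, s(a, p) ∈ U.edges ∧ s(b, p) ∈ U.edges ∧ s(p, g) ∈ U.edges ∧
      p ≠ a ∧ p ≠ b ∧ g ≠ a ∧ g ≠ b ∧ g ≠ p ∧
      W.verts = U.verts \ {a, p} ∧
      W.edges = insert s(b, g) (U.edges \ {s(a, p), s(b, p), s(p, g)})))

/-- `W` is obtained from `U` by reducing the reticulated cherry `(a,b)`: delete the
reticulation edge `{u,v}` and suppress the two resulting degree-2 vertices. -/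
def UReduceRetCherry (U W : UNet) (a b : ℕ) : Prop :=
  URetCherry U a b ∧
  ∃ u v ga gb, s(a, u) ∈ U.edges ∧ s(u, v) ∈ U.edges ∧ s(v, b) ∈ U.edges ∧
    u ≠ v ∧ u ≠ a ∧ v ≠ b ∧ UOnCycle U u v ∧
    s(u, ga) ∈ U.edges ∧ ga ≠ a ∧ ga ≠ v ∧ ga ≠ u ∧
    s(v, gb) ∈ U.edges ∧ gb ≠ b ∧ gb ≠ u ∧ gb ≠ v ∧
    W.verts = U.verts \ {u, v} ∧
    W.edges = insert s(a, ga) (insert s(b, gb)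
      (U.edges \ {s(u, v), s(a, u), s(u, ga), s(v, b), s(v, gb)}))

/-- The step from `U` to `W` is the cherry reduction recorded by the pick `r`
(unrooted version). -/
def UStep (U W : UNet) : Pick → Prop
  | .cherry x y => UReduceCherry U W x y
  | .ret x y => UReduceRetCherry U W x y

/-- `(Us 0, …, Us k)` is a cherry-reduction sequence of unrooted networks whose associated
cherry-picking sequence is `(rs 0, …, rs (k-1))`. -/
def UCherrySeq (Us : ℕ → UNet) (rs : ℕ → Pick) (k : ℕ) : Prop :=
  ∀ i < k, UStep (Us i) (Us (i + 1)) (rs i)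

/-- `(Us 0, …, Us k)` is a cherry-reduction sequence of unrooted networks. -/
def UReductionSeq (Us : ℕ → UNet) (k : ℕ) : Prop :=
  ∀ i < k, ∃ r, UStep (Us i) (Us (i + 1)) r

/-- The rooted network `R` is an orientation of the unrooted network `U`: `U` is obtained
from `R` by forgetting arc directions and suppressing the root. -/
def IsOrientationOf (R : DNet) (U : UNet) : Prop :=
  (R.arcs = ∅ ∧ U.edges = ∅ ∧ U.verts = R.verts) ∨
  (∃ ρ c₁ c₂, ρ ∈ R.verts ∧ R.inDeg ρ = 0 ∧ c₁ ≠ c₂ ∧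
    (ρ, c₁) ∈ R.arcs ∧ (ρ, c₂) ∈ R.arcs ∧
    U.verts = R.verts.erase ρ ∧
    U.edges = insert s(c₁, c₂)
      ((R.arcs.filter (fun p => p.1 ≠ ρ)).image (fun p => s(p.1, p.2))))

/-- `U` is an unrooted tree-child network on `X`: it has a tree-child orientation. -/
def UnrootedTreeChild (U : UNet) (X : Finset ℕ) : Prop :=
  ∃ R : DNet, IsRootedBinaryNet R X ∧ R.TreeChild ∧ IsOrientationOf R U

/-- The pick `r` is one of the picks associated with the recorded reduction `p`:
it must agree with `p` on cherry reductions, and may swap the two coordinates of a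
reticulated-cherry reduction. -/
def PickAssoc : Pick → Pick → Prop
  | .cherry x y, r => r = .cherry x y
  | .ret x y, r => r = .ret x y ∨ r = .ret y x

/-- `X`-labelled isomorphism of unrooted networks. -/
def UIso (X : Finset ℕ) (U W : UNet) : Prop :=
  ∃ f : ℕ → ℕ, Set.BijOn f ↑U.verts ↑W.verts ∧ (∀ x ∈ X, f x = x) ∧
    W.edges = U.edges.image (Sym2.map f)



section TCBasics
open Finset Relation

namespace DNet

variable {N M : DNet}

lemma outDeg_pos {u v : ℕ} (h : (u,v) ∈ N.arcs) : 0 < N.outDeg u :=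
  Finset.card_pos.2 ⟨(u,v), Finset.mem_filter.2 ⟨h, rfl⟩⟩

lemma inDeg_pos {u v : ℕ} (h : (u,v) ∈ N.arcs) : 0 < N.inDeg v :=
  Finset.card_pos.2 ⟨(u,v), Finset.mem_filter.2 ⟨h, rfl⟩⟩

lemma outDeg_zero {u : ℕ} (h : N.outDeg u = 0) (v : ℕ) : (u,v) ∉ N.arcs :=
  fun hm => by have := outDeg_pos hm; omega

lemma inDeg_zero {v : ℕ} (h : N.inDeg v = 0) (u : ℕ) : (u,v) ∉ N.arcs :=
  fun hm => by have := inDeg_pos hm; omega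

lemma exists_parent {v : ℕ} (h : N.inDeg v ≠ 0) : ∃ u, (u,v) ∈ N.arcs := by
  obtain ⟨e, he⟩ := Finset.card_pos.1 (Nat.pos_of_ne_zero h)
  rw [Finset.mem_filter] at he
  exact ⟨e.1, by rw [show (e.1, v) = e from Prod.ext rfl he.2.symm]; exact he.1⟩

lemma exists_child {u : ℕ} (h : N.outDeg u ≠ 0) : ∃ v, (u,v) ∈ N.arcs := by
  obtain ⟨e, he⟩ := Finset.card_pos.1 (Nat.pos_of_ne_zero h)
  rw [Finset.mem_filter] at he
  exact ⟨e.2, by rw [show (u, e.2) = e from Prod.ext he.2.symm rfl]; exact he.1⟩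

lemma two_le_outDeg {u v w : ℕ} (hv : (u,v) ∈ N.arcs) (hw : (u,w) ∈ N.arcs) (hvw : v ≠ w) :
    2 ≤ N.outDeg u := by
  have hsub : ({(u,v),(u,w)} : Finset (ℕ×ℕ)) ⊆ N.arcs.filter (fun p => p.1 = u) := by
    intro e he
    simp only [Finset.mem_insert, Finset.mem_singleton] at he
    rcases he with rfl | rfl <;> exact Finset.mem_filter.2 ⟨by assumption, rfl⟩
  have h2 : ({(u,v),(u,w)} : Finset (ℕ×ℕ)).card = 2 := Finset.card_pair (by simp [hvw])
  calc 2 = _ := h2.symm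
  _ ≤ _ := Finset.card_le_card hsub

lemma two_le_inDeg {u v w : ℕ} (hv : (u,w) ∈ N.arcs) (hw : (v,w) ∈ N.arcs) (huv : u ≠ v) :
    2 ≤ N.inDeg w := by
  have hsub : ({(u,w),(v,w)} : Finset (ℕ×ℕ)) ⊆ N.arcs.filter (fun p => p.2 = w) := by
    intro e he
    simp only [Finset.mem_insert, Finset.mem_singleton] at he
    rcases he with rfl | rfl <;> exact Finset.mem_filter.2 ⟨by assumption, rfl⟩
  have h2 : ({(u,w),(v,w)} : Finset (ℕ×ℕ)).card = 2 := Finset.card_pair (by simp [huv])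
  calc 2 = _ := h2.symm
  _ ≤ _ := Finset.card_le_card hsub

lemma parent_unique {x p q : ℕ} (h : N.inDeg x = 1) (hp : (p,x) ∈ N.arcs)
    (hq : (q,x) ∈ N.arcs) : p = q := by
  by_contra hne
  have := two_le_inDeg hp hq hne
  omega

lemma child_unique {u c d : ℕ} (h : N.outDeg u = 1) (hc : (u,c) ∈ N.arcs)
    (hd : (u,d) ∈ N.arcs) : c = d := by
  by_contra hne
  have := two_le_outDeg hc hd hne
  omega

lemma outDeg_two_children {u : ℕ} (h : N.outDeg u = 2) :
    ∃ c d, c ≠ d ∧ (u,c) ∈ N.arcs ∧ (u,d) ∈ N.arcs ∧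
      ∀ e, (u,e) ∈ N.arcs → e = c ∨ e = d := by
  obtain ⟨x, y, hxy, hset⟩ := Finset.card_eq_two.1 h
  have hx : x ∈ N.arcs.filter (fun p => p.1 = u) := by rw [hset]; simp
  have hy : y ∈ N.arcs.filter (fun p => p.1 = u) := by rw [hset]; simp
  rw [Finset.mem_filter] at hx hy
  refine ⟨x.2, y.2, ?_, ?_, ?_, ?_⟩
  · intro heq
    exact hxy (Prod.ext (hx.2.trans hy.2.symm) heq)
  · rw [show (u, x.2) = x from Prod.ext hx.2.symm rfl]; exact hx.1
  · rw [show (u, y.2) = y from Prod.ext hy.2.symm rfl]; exact hy.1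
  · intro e he
    have : (u,e) ∈ N.arcs.filter (fun p => p.1 = u) := Finset.mem_filter.2 ⟨he, rfl⟩
    rw [hset] at this
    simp only [Finset.mem_insert, Finset.mem_singleton] at this
    rcases this with rfl | rfl
    · exact Or.inl rfl
    · exact Or.inr rfl

lemma inDeg_two_parents {u : ℕ} (h : N.inDeg u = 2) :
    ∃ c d, c ≠ d ∧ (c,u) ∈ N.arcs ∧ (d,u) ∈ N.arcs ∧
      ∀ e, (e,u) ∈ N.arcs → e = c ∨ e = d := by
  obtain ⟨x, y, hxy, hset⟩ := Finset.card_eq_two.1 h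
  have hx : x ∈ N.arcs.filter (fun p => p.2 = u) := by rw [hset]; simp
  have hy : y ∈ N.arcs.filter (fun p => p.2 = u) := by rw [hset]; simp
  rw [Finset.mem_filter] at hx hy
  refine ⟨x.1, y.1, ?_, ?_, ?_, ?_⟩
  · intro heq
    exact hxy (Prod.ext heq (hx.2.trans hy.2.symm))
  · rw [show (x.1, u) = x from Prod.ext rfl hx.2.symm]; exact hx.1
  · rw [show (y.1, u) = y from Prod.ext rfl hy.2.symm]; exact hy.1
  · intro e he
    have : (e,u) ∈ N.arcs.filter (fun p => p.2 = u) := Finset.mem_filter.2 ⟨he, rfl⟩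
    rw [hset] at this
    simp only [Finset.mem_insert, Finset.mem_singleton] at this
    rcases this with rfl | rfl
    · exact Or.inl rfl
    · exact Or.inr rfl

lemma Acyclic.irrefl (h : N.Acyclic) {u : ℕ} : (u,u) ∉ N.arcs :=
  fun hm => h u (Relation.TransGen.single hm)

lemma acyclic_of_mono (hN : N.Acyclic) (h : ∀ e ∈ M.arcs, Relation.TransGen N.Arc e.1 e.2) :
    M.Acyclic := by
  have key : ∀ u v, Relation.TransGen M.Arc u v → Relation.TransGen N.Arc u v := by
    intro u v huv
    induction huv with
    | single h' => exact h _ h'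
    | tail _ h' ih => exact ih.trans (h _ h')
  exact fun v hv => hN v (key _ _ hv)

end DNet

end TCBasics

section TCChains
open Finset Relation

namespace DNet

variable {N : DNet}

lemma exists_source (hac : N.Acyclic) {T : Finset ℕ} (hne : T.Nonempty) :
    ∃ m ∈ T, ∀ u ∈ T, (u, m) ∉ N.arcs := by
  by_contra hcon
  push_neg at hcon
  obtain ⟨t0, ht0⟩ := hne
  choose f hf1 hf2 using hcon
  let g : ℕ → {x // x ∈ T} := fun n => Nat.rec ⟨t0, ht0⟩ (fun _ p => ⟨f p.1 p.2, hf1 p.1 p.2⟩) n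
  have hstep : ∀ n, ((g (n+1)).1, (g n).1) ∈ N.arcs := fun n => hf2 (g n).1 (g n).2
  have htg : ∀ i d, Relation.TransGen N.Arc (g (i+d+1)).1 (g i).1 := by
    intro i d
    induction d with
    | zero => exact Relation.TransGen.single (hstep i)
    | succ d ih => exact (Relation.TransGen.single (hstep (i+d+1))).trans ih
  have hmaps : ∀ n ∈ Finset.range (T.card + 1), (g n).1 ∈ T := fun n _ => (g n).2
  obtain ⟨i, hi, j, hj, hij, heq⟩ :=
    Finset.exists_ne_map_eq_of_card_lt_of_maps_to (by simp) hmaps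
  rcases Nat.lt_or_ge i j with hlt | hge
  · obtain ⟨d, rfl⟩ : ∃ d, j = i + d + 1 := ⟨j - i - 1, by omega⟩
    exact hac (g i).1 (heq ▸ htg i d)
  · have hlt : j < i := by omega
    obtain ⟨d, rfl⟩ : ∃ d, i = j + d + 1 := ⟨i - j - 1, by omega⟩
    exact hac (g j).1 (heq ▸ htg j d)

lemma chain_transGen {s : ℕ → ℕ → Prop} :
    ∀ {x : ℕ} {t : List ℕ}, List.Chain s x t → ∀ y ∈ t, Relation.TransGen s x y := by
  intro x t
  induction t generalizing x with
  | nil => simp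
  | cons b t' ih =>
    intro h y hy
    rcases List.chain_cons.1 h with ⟨hxb, hb⟩
    rcases List.mem_cons.1 hy with rfl | hy'
    · exact Relation.TransGen.single hxb
    · exact (Relation.TransGen.single hxb).trans (ih hb y hy')

lemma chain'_nodup (hac : N.Acyclic) :
    ∀ {l : List ℕ}, l.Chain' (fun u v => (v,u) ∈ N.arcs) → l.Nodup := by
  intro l
  induction l with
  | nil => simp
  | cons x t ih =>
    intro h
    have ht : List.Chain (fun u v => (v,u) ∈ N.arcs) x t := h
    refine List.nodup_cons.2 ⟨fun hx => ?_, ih h.tail⟩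
    have h1 : Relation.TransGen (fun u v => (v,u) ∈ N.arcs) x x := chain_transGen ht x hx
    have h2 : Relation.TransGen (Function.swap N.Arc) x x := h1
    exact hac x (Relation.transGen_swap.1 h2)

lemma chain'_mem_verts (harc : ∀ p ∈ N.arcs, p.1 ∈ N.verts ∧ p.2 ∈ N.verts)
    {l : List ℕ} (h : l.Chain' (fun u v => (v,u) ∈ N.arcs)) (h2 : 2 ≤ l.length) :
    ∀ y ∈ l, y ∈ N.verts := by
  match l, h2 with
  | x :: b :: t, _ =>
    intro y hy
    rcases List.isChain_cons_cons.1 h with ⟨hxb, hb⟩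
    rcases List.mem_cons.1 hy with rfl | hy'
    · exact (harc _ hxb).2
    · rcases List.mem_cons.1 hy' with rfl | hy'' 
      · exact (harc _ hxb).1
      · have htg : Relation.TransGen (fun u v => (v,u) ∈ N.arcs) b y :=
          chain_transGen (hb : List.Chain _ b t) y hy''
        obtain ⟨z, _, hzy⟩ := Relation.TransGen.tail'_iff.1 htg
        exact (harc _ hzy).1

lemma chain'_length_le (hac : N.Acyclic)
    (harc : ∀ p ∈ N.arcs, p.1 ∈ N.verts ∧ p.2 ∈ N.verts)
    {l : List ℕ} (h : l.Chain' (fun u v => (v,u) ∈ N.arcs)) (h2 : 2 ≤ l.length) :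
    l.length ≤ N.verts.card := by
  classical
  have hnd := chain'_nodup hac h
  have hsub : l.toFinset ⊆ N.verts := fun y hy =>
    chain'_mem_verts harc h h2 y (List.mem_toFinset.1 hy)
  calc l.length = l.toFinset.card := (List.toFinset_card_of_nodup hnd).symm
  _ ≤ _ := Finset.card_le_card hsub

end DNet

end TCChains

section TCReducible
open Finset Relation DNet

/-- nondegenerate rooted binary net structure (without leaf-set labelling) -/
def Nondeg (N : DNet) : Prop :=
  (∀ p ∈ N.arcs, p.1 ∈ N.verts ∧ p.2 ∈ N.verts) ∧ N.Acyclic ∧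
  (∃! ρ, ρ ∈ N.verts ∧ N.inDeg ρ = 0) ∧
  (∀ v ∈ N.verts, N.IsRoot v ∨ N.IsLeaf v ∨ N.IsTreeVertex v ∨ N.IsRet v)

theorem exists_reducible {N : DNet} (hnd : Nondeg N) (htc : N.TreeChild) :
    (∃ a b, RCherry N a b) ∨ (∃ a b, RRetCherry N a b) := by
  classical
  obtain ⟨harc, hac, ⟨ρ, ⟨hρv, hρ0⟩, hρu⟩, hclass⟩ := hnd
  have hleaf : ∀ v ∈ N.verts, N.outDeg v = 0 → N.inDeg v ≠ 0 → N.IsLeaf v := by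
    intro v hv h0 h1
    rcases hclass v hv with h|h|h|h
    · exact absurd h.2.2 (by omega)
    · exact h
    · exact absurd h.2.2 (by omega)
    · exact absurd h.2.2 (by omega)
  have hρroot : N.IsRoot ρ := by
    rcases hclass ρ hρv with h|h|h|h
    · exact h
    · exact absurd h.2.1 (by omega)
    · exact absurd h.2.1 (by omega)
    · exact absurd h.2.1 (by omega)
  obtain ⟨c1, c2, hc12, hc1, hc2, _⟩ := outDeg_two_children hρroot.2.2
  set s : ℕ → ℕ → Prop := fun u v => (v,u) ∈ N.arcs with hsdef
  set P : ℕ → Prop := fun n => 2 ≤ n ∧ ∃ l : List ℕ, l.Chain' s ∧ l.length = n with hPdef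
  haveI : DecidablePred P := fun _ => Classical.propDecidable _
  have hPB : ∀ n, P n → n ≤ N.verts.card := by
    rintro n ⟨h2, l, hl, rfl⟩
    exact chain'_length_le hac harc hl h2
  have hP2 : P 2 := by
    refine ⟨le_refl 2, [c1, ρ], ?_, rfl⟩
    exact List.isChain_cons_cons.2 ⟨hc1, List.isChain_singleton ρ⟩
  obtain ⟨hn2, l, hl, hlen⟩ := Nat.findGreatest_spec (hPB 2 hP2) hP2
  have hgt : ∀ (l' : List ℕ), l'.Chain' s → 2 ≤ l'.length →
      l'.length ≤ Nat.findGreatest P N.verts.card := by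
    intro l' h1 h2
    by_contra hbig
    push_neg at hbig
    exact Nat.findGreatest_is_greatest (P := P) hbig (hPB _ ⟨h2, l', h1, rfl⟩) ⟨h2, l', h1, rfl⟩
  rcases l with _ | ⟨z, l1⟩
  · simp at hlen; omega
  rcases l1 with _ | ⟨y, t⟩
  · simp at hlen; omega
  simp only [List.length_cons] at hlen
  obtain ⟨hyz, hylt⟩ := List.isChain_cons_cons.1 hl
  have hzv : z ∈ N.verts := (harc _ hyz).2
  have hyv : y ∈ N.verts := (harc _ hyz).1
  have hzout : N.outDeg z = 0 := by
    by_contra h0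
    obtain ⟨c, hc⟩ := exists_child h0
    have hch : (c :: z :: y :: t).Chain' s := List.isChain_cons_cons.2 ⟨hc, hl⟩
    have := hgt _ hch (by simp)
    simp only [List.length_cons] at this
    omega
  have hzleaf : N.IsLeaf z := hleaf z hzv hzout (by have := inDeg_pos hyz; omega)
  have hyout : N.outDeg y ≠ 0 := by have := outDeg_pos hyz; omega
  have hmkleaf : ∀ u v : ℕ, (u,v) ∈ N.arcs → N.outDeg v = 0 → N.IsLeaf v := by
    intro u v huv h0
    exact hleaf v (harc _ huv).2 h0 (by have := inDeg_pos huv; omega)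
  have hycases : N.outDeg y = 2 ∨ N.IsRet y := by
    rcases hclass y hyv with h|h|h|h
    · exact Or.inl h.2.2
    · exact absurd h.2.2 hyout
    · exact Or.inl h.2.2
    · exact Or.inr h
  rcases hycases with hy | hy
  · -- y root or tree vertex: two children
    obtain ⟨c, d, hcd, hc, hd, hall⟩ := outDeg_two_children hy
    have key : ∀ o : ℕ, (y,o) ∈ N.arcs → o ≠ z →
        (∃ a b, RCherry N a b) ∨ (∃ a b, RRetCherry N a b) := by
      intro o ho hoz
      by_cases h0 : N.outDeg o = 0
      · exact Or.inl ⟨z, o, hoz.symm, hzleaf, hmkleaf y o ho h0, y, hyz, ho⟩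
      · exfalso
        obtain ⟨e, he⟩ := exists_child h0
        have hch : (e :: o :: y :: t).Chain' s :=
          List.isChain_cons_cons.2 ⟨he, List.isChain_cons_cons.2 ⟨ho, hl.tail⟩⟩
        have := hgt _ hch (by simp)
        simp only [List.length_cons] at this
        omega
    rcases hall z hyz with rfl | rfl
    · exact key d hd (fun h => hcd h.symm)
    · exact key c hc hcd
  · -- y reticulation
    obtain ⟨p1, p2, hp12, hp1, hp2, _⟩ := inDeg_two_parents hy.2.1
    rcases t with _ | ⟨w, t'⟩
    · exfalso
      have hch : ([z, y, p1] : List ℕ).Chain' s :=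
        List.isChain_cons_cons.2 ⟨hyz, List.isChain_cons_cons.2 ⟨hp1, List.isChain_singleton _⟩⟩
      have := hgt _ hch (by simp)
      simp only [List.length_cons] at this hlen
      omega
    have hyw : (w, y) ∈ N.arcs := (List.isChain_cons_cons.1 hl.tail).1
    have hwv : w ∈ N.verts := (harc _ hyw).1
    have hwout : N.outDeg w ≠ 0 := by have := outDeg_pos hyw; omega
    obtain ⟨c, hwc, hgood⟩ := htc w hwv hwout
    have hcy : c ≠ y := by
      rintro rfl
      rcases hgood with hg | hg
      · have h1 := hg.2.2; have h2 := hy.2.2; omega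
      · have h1 := hg.2.2; have h2 := hy.2.2; omega
    rcases hgood with hg | hg
    · -- c tree vertex
      obtain ⟨d1, d2, hd12, hd1, hd2, _⟩ := outDeg_two_children hg.2.2
      have hext : ∀ d : ℕ, (c,d) ∈ N.arcs → N.outDeg d ≠ 0 → False := by
        intro d hd h0
        obtain ⟨e, he⟩ := exists_child h0
        have hch : (e :: d :: c :: w :: t').Chain' s :=
          List.isChain_cons_cons.2 ⟨he, List.isChain_cons_cons.2 ⟨hd,
            List.isChain_cons_cons.2 ⟨hwc, hl.tail.tail⟩⟩⟩
        have := hgt _ hch (by simp)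
        simp only [List.length_cons] at this hlen
        omega
      by_cases h1 : N.outDeg d1 = 0
      · by_cases h2 : N.outDeg d2 = 0
        · exact Or.inl ⟨d1, d2, hd12, hmkleaf c d1 hd1 h1, hmkleaf c d2 hd2 h2, c, hd1, hd2⟩
        · exact (hext d2 hd2 h2).elim
      · exact (hext d1 hd1 h1).elim
    · -- c leaf : reticulated cherry (z, c)
      right
      have hwy' : w ≠ y := fun h => hac y (Relation.TransGen.single (h ▸ hyw))
      have hzc : z ≠ c := by
        rintro rfl
        exact hwy' (parent_unique hzleaf.2.1 hwc hyz)
      exact ⟨z, c, hzc, hzleaf, hg, y, w, hyz, hwc, hy, hyw⟩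
end TCReducible

section TCStep
open Finset Relation DNet

/-- the tree-child invariant we propagate -/
def Good (N : DNet) : Prop :=
  N.TreeChild ∧ ((∃ x, N.verts = {x} ∧ N.arcs = ∅) ∨ Nondeg N)

/-- leaf `x` with parent `q` such that `q` has in-degree ≤ 1 and
all children of `q` have in-degree ≤ 1 -/
def Shielded (N : DNet) (x q : ℕ) : Prop :=
  N.IsLeaf x ∧ (q, x) ∈ N.arcs ∧ N.inDeg q ≤ 1 ∧
    ∀ c, (q, c) ∈ N.arcs → N.inDeg c ≤ 1

lemma filter_eq_of_mem_iff {A B : Finset (ℕ×ℕ)} {P : ℕ×ℕ → Prop} [DecidablePred P]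
    (hmem : ∀ x, P x → (x ∈ B ↔ x ∈ A)) : B.filter P = A.filter P := by
  ext x
  simp only [Finset.mem_filter]
  constructor
  · rintro ⟨hx, hPx⟩; exact ⟨(hmem x hPx).1 hx, hPx⟩
  · rintro ⟨hx, hPx⟩; exact ⟨(hmem x hPx).2 hx, hPx⟩

lemma filter_card_swap {A B : Finset (ℕ×ℕ)} {P : ℕ×ℕ → Prop} [DecidablePred P] {f e : ℕ×ℕ}
    (hmem : ∀ x, P x → (x ∈ B ↔ x = f ∨ (x ∈ A ∧ x ≠ e)))
    (hPf : P f) (hfA : f ∉ A) (heA : e ∈ A) (hPe : P e) :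
    (B.filter P).card = (A.filter P).card := by
  have hBP : B.filter P = insert f ((A.filter P).erase e) := by
    ext x
    simp only [Finset.mem_filter, Finset.mem_insert, Finset.mem_erase]
    constructor
    · rintro ⟨hx, hPx⟩
      rcases (hmem x hPx).1 hx with rfl | ⟨h1, h2⟩
      · exact Or.inl rfl
      · exact Or.inr ⟨h2, h1, hPx⟩
    · rintro (rfl | ⟨hne, hA, hPx⟩)
      · exact ⟨(hmem _ hPf).2 (Or.inl rfl), hPf⟩
      · exact ⟨(hmem x hPx).2 (Or.inr ⟨hA, hne⟩), hPx⟩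
  rw [hBP, Finset.card_insert_of_notMem
      (fun h => hfA (Finset.mem_filter.1 (Finset.mem_of_mem_erase h)).1),
    Finset.card_erase_of_mem (Finset.mem_filter.2 ⟨heA, hPe⟩)]
  have : 1 ≤ (A.filter P).card := Finset.card_pos.2 ⟨e, Finset.mem_filter.2 ⟨heA, hPe⟩⟩
  omega

lemma filter_card_swap2 {A B : Finset (ℕ×ℕ)} {P : ℕ×ℕ → Prop} [DecidablePred P]
    {f1 f2 e1 e2 : ℕ×ℕ}
    (hmem : ∀ x, P x → (x ∈ B ↔ x = f1 ∨ x = f2 ∨ (x ∈ A ∧ x ≠ e1 ∧ x ≠ e2)))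
    (hPf1 : P f1) (hPf2 : P f2) (hf1A : f1 ∉ A) (hf2A : f2 ∉ A) (hff : f1 ≠ f2)
    (he1A : e1 ∈ A) (he2A : e2 ∈ A) (hPe1 : P e1) (hPe2 : P e2) (hee : e1 ≠ e2) :
    (B.filter P).card = (A.filter P).card := by
  have hBP : B.filter P = insert f1 (insert f2 (((A.filter P).erase e1).erase e2)) := by
    ext x
    simp only [Finset.mem_filter, Finset.mem_insert, Finset.mem_erase]
    constructor
    · rintro ⟨hx, hPx⟩
      rcases (hmem x hPx).1 hx with rfl | rfl | ⟨h1, h2, h3⟩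
      · exact Or.inl rfl
      · exact Or.inr (Or.inl rfl)
      · exact Or.inr (Or.inr ⟨h3, h2, h1, hPx⟩)
    · rintro (rfl | rfl | ⟨hne2, hne1, hA, hPx⟩)
      · exact ⟨(hmem _ hPf1).2 (Or.inl rfl), hPf1⟩
      · exact ⟨(hmem _ hPf2).2 (Or.inr (Or.inl rfl)), hPf2⟩
      · exact ⟨(hmem x hPx).2 (Or.inr (Or.inr ⟨hA, hne1, hne2⟩)), hPx⟩
  have he2m : e2 ∈ (A.filter P).erase e1 :=
    Finset.mem_erase.2 ⟨fun h => hee (h.symm), Finset.mem_filter.2 ⟨he2A, hPe2⟩⟩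
  have hf2m : f2 ∉ insert f2 (((A.filter P).erase e1).erase e2) → True := fun _ => trivial
  rw [hBP]
  rw [Finset.card_insert_of_notMem (by
        intro h
        rcases Finset.mem_insert.1 h with h' | h'
        · exact hff h'
        · exact hf1A (Finset.mem_filter.1
            (Finset.mem_of_mem_erase (Finset.mem_of_mem_erase h'))).1),
     Finset.card_insert_of_notMem (fun h => hf2A (Finset.mem_filter.1
        (Finset.mem_of_mem_erase (Finset.mem_of_mem_erase h))).1),
     Finset.card_erase_of_mem he2m,
     Finset.card_erase_of_mem (Finset.mem_filter.2 ⟨he1A, hPe1⟩)]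
  have h2 : 2 ≤ (A.filter P).card := by
    have hsub : ({e1, e2} : Finset (ℕ×ℕ)) ⊆ A.filter P := by
      intro x hx
      rcases Finset.mem_insert.1 hx with rfl | hx'
      · exact Finset.mem_filter.2 ⟨he1A, hPe1⟩
      · rw [Finset.mem_singleton.1 hx']; exact Finset.mem_filter.2 ⟨he2A, hPe2⟩
    calc 2 = ({e1, e2} : Finset (ℕ×ℕ)).card := (Finset.card_pair hee).symm
    _ ≤ _ := Finset.card_le_card hsub
  omega

end TCStep

section TCCherry
open Finset Relation DNet

theorem cherry_step_analysis {N M : DNet} {a b : ℕ} (hG : Good N) (hs : RReduceCherry N M a b) :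
    Good M ∧ (∀ x q, Shielded N x q → x ≠ a → x ≠ b → Shielded M x q) := by
  classical
  obtain ⟨htc, hcase⟩ := hG
  obtain ⟨⟨hab, ha, hb, _⟩, p, hpa, hpb, hred⟩ := hs
  rcases hcase with ⟨x0, hv0, ha0⟩ | hnd
  · rw [ha0] at hpa; exact absurd hpa (Finset.notMem_empty _)
  obtain ⟨harc, hac, ⟨ρ, ⟨hρv, hρ0⟩, hρu⟩, hclass⟩ := hnd
  have hirr : ∀ u : ℕ, (u,u) ∉ N.arcs := fun u => hac.irrefl
  have hpv : p ∈ N.verts := (harc _ hpa).1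
  have hain : N.inDeg a = 1 := ha.2.1
  have haout : N.outDeg a = 0 := ha.2.2
  have hbin : N.inDeg b = 1 := hb.2.1
  have hbout : N.outDeg b = 0 := hb.2.2
  have hpout2 : N.outDeg p = 2 := by
    have h2 := two_le_outDeg hpa hpb hab
    rcases hclass p hpv with h|h|h|h
    · exact h.2.2
    · have := h.2.2; omega
    · exact h.2.2
    · have := h.2.2; omega
  have hchildren : ∀ e, (p,e) ∈ N.arcs → e = a ∨ e = b := by
    obtain ⟨c, d, hcd, hc, hd, hall⟩ := outDeg_two_children hpout2
    intro e he
    rcases hall e he with rfl|rfl <;> rcases hall a hpa with h1|h1 <;>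
      rcases hall b hpb with h2|h2 <;> omega
  have hpa_ne : p ≠ a := fun h => hirr a (by rw [h] at hpa; exact hpa)
  have hpb_ne : p ≠ b := fun h => hirr b (by rw [h] at hpb; exact hpb)
  have hauniq : ∀ u, (u,a) ∈ N.arcs → u = p := fun u hu => parent_unique hain hu hpa
  have hbuniq : ∀ u, (u,b) ∈ N.arcs → u = p := fun u hu => parent_unique hbin hu hpb
  rcases hred with ⟨hp0, hMv, hMa⟩ | ⟨g, hgp, hMv, hMa⟩
  · -- p is the root : N is the 3-vertex network
    have hpρ : p = ρ := hρu p ⟨hpv, hp0⟩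
    have hVsub : N.verts ⊆ {p,a,b} := by
      intro w hw
      by_contra hwno
      have hTne : (N.verts \ {p,a,b}).Nonempty :=
        ⟨w, Finset.mem_sdiff.2 ⟨hw, hwno⟩⟩
      obtain ⟨m, hm, hmin⟩ := exists_source hac hTne
      rw [Finset.mem_sdiff] at hm
      have hmpab : m ∉ ({p,a,b} : Finset ℕ) := hm.2
      simp only [Finset.mem_insert, Finset.mem_singleton, not_or] at hmpab
      have hm0 : N.inDeg m ≠ 0 := by
        intro h0
        have : m = ρ := hρu m ⟨hm.1, h0⟩
        exact hmpab.1 (this.trans hpρ.symm)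
      obtain ⟨u, hu⟩ := exists_parent hm0
      have huT : u ∉ N.verts \ {p,a,b} := fun hT => hmin u hT hu
      have huv : u ∈ N.verts := (harc _ hu).1
      have hupab : u ∈ ({p,a,b} : Finset ℕ) := by
        by_contra hno
        exact huT (Finset.mem_sdiff.2 ⟨huv, hno⟩)
      simp only [Finset.mem_insert, Finset.mem_singleton] at hupab
      rcases hupab with rfl | rfl | rfl
      · rcases hchildren m hu with rfl|rfl
        · exact hmpab.2.1 rfl
        · exact hmpab.2.2 rfl
      · exact outDeg_zero haout m hu
      · exact outDeg_zero hbout m hu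
    have hVeq : N.verts = {p,a,b} := by
      apply subset_antisymm hVsub
      intro w hw
      simp only [Finset.mem_insert, Finset.mem_singleton] at hw
      rcases hw with rfl|rfl|rfl
      · exact hpv
      · exact ha.1
      · exact hb.1
    have hAeq : N.arcs = {(p,a),(p,b)} := by
      apply subset_antisymm
      · rintro ⟨u,v⟩ he
        have hu1 : u ∈ N.verts := (harc _ he).1
        rw [hVeq] at hu1
        simp only [Finset.mem_insert, Finset.mem_singleton] at hu1
        rcases hu1 with rfl|rfl|rfl
        · rcases hchildren v he with rfl|rfl <;> simp
        · exact absurd he (outDeg_zero haout v)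
        · exact absurd he (outDeg_zero hbout v)
      · rintro e he
        simp only [Finset.mem_insert, Finset.mem_singleton] at he
        rcases he with rfl|rfl
        · exact hpa
        · exact hpb
    have hMv' : M.verts = {b} := by
      rw [hMv, hVeq]
      ext w
      simp only [Finset.mem_sdiff, Finset.mem_insert, Finset.mem_singleton]
      constructor
      · rintro ⟨h1, h2⟩
        rcases h1 with rfl|rfl|rfl
        · exact absurd (Or.inr rfl) h2
        · exact absurd (Or.inl rfl) h2
        · rfl
      · rintro rfl
        refine ⟨Or.inr (Or.inr rfl), ?_⟩
        rintro (rfl|rfl)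
        · exact hab rfl
        · exact hpb_ne rfl
    have hMa' : M.arcs = ∅ := by
      rw [hMa, hAeq, Finset.sdiff_self]
    refine ⟨⟨?_, Or.inl ⟨b, hMv', hMa'⟩⟩, ?_⟩
    · intro v hv hout
      exfalso
      apply hout
      unfold DNet.outDeg
      rw [hMa']
      simp
    · intro x q hsh hxa hxb
      exfalso
      have hxv : x ∈ N.verts := hsh.1.1
      rw [hVeq] at hxv
      simp only [Finset.mem_insert, Finset.mem_singleton] at hxv
      rcases hxv with rfl|rfl|rfl
      · have := hsh.1.2.1; omega
      · exact hxa rfl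
      · exact hxb rfl
  · -- p is not the root : suppression case
    have hgne_p : g ≠ p := fun h => hirr p (by rw [h] at hgp; exact hgp)
    have hga : g ≠ a := by
      intro h; rw [h] at hgp; exact outDeg_zero haout p hgp
    have hgb : g ≠ b := by
      intro h; rw [h] at hgp; exact outDeg_zero hbout p hgp
    have hgbarc : (g,b) ∉ N.arcs := fun h => hgne_p (hbuniq g h)
    have hpin : N.inDeg p = 1 := by
      have h1 := inDeg_pos hgp
      rcases hclass p hpv with h|h|h|h
      · have := h.2.1; omega
      · have := h.2.2; omega
      · exact h.2.1
      · have := h.2.2; omega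
    have hpuniq : ∀ u, (u,p) ∈ N.arcs → u = g := fun u hu => parent_unique hpin hu hgp
    have hgv : g ∈ N.verts := (harc _ hgp).1
    have hMmem : ∀ v, v ∈ M.verts ↔ v ∈ N.verts ∧ v ≠ a ∧ v ≠ p := by
      intro v
      rw [hMv]
      simp only [Finset.mem_sdiff, Finset.mem_insert, Finset.mem_singleton, not_or]
    have hMarc : ∀ e : ℕ×ℕ, e ∈ M.arcs ↔
        e = (g,b) ∨ (e ∈ N.arcs ∧ e ≠ (g,p) ∧ e ≠ (p,a) ∧ e ≠ (p,b)) := by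
      intro e
      rw [hMa]
      simp only [Finset.mem_insert, Finset.mem_sdiff, Finset.mem_singleton, not_or]
    -- degree preservation2
    have pair1 : ∀ (u w x y : ℕ), (u,w) = ((x,y) : ℕ×ℕ) → u = x := by
      intro u w x y h; rw [Prod.mk.injEq] at h; exact h.1
    have pair2 : ∀ (u w x y : ℕ), (u,w) = ((x,y) : ℕ×ℕ) → w = y := by
      intro u w x y h; rw [Prod.mk.injEq] at h; exact h.2
    have mkpair : ∀ (u w x y : ℕ), u = x → w = y → (u,w) = ((x,y) : ℕ×ℕ) := by
      intro u w x y h1 h2; rw [Prod.mk.injEq]; exact ⟨h1, h2⟩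
    have hout_pres : ∀ v, v ≠ p → M.outDeg v = N.outDeg v := by
      intro v hvp
      unfold DNet.outDeg
      by_cases hvg : v = g
      · refine filter_card_swap (f := (v,b)) (e := (v,p)) ?_ rfl
          (by rw [hvg]; exact hgbarc) (by rw [hvg]; exact hgp) rfl
        rintro ⟨u,w⟩ (hP : u = v)
        subst hP
        rw [hMarc]
        constructor
        · rintro (h | ⟨hN, h2, _, _⟩)
          · exact Or.inl (mkpair _ _ _ _ rfl (pair2 _ _ _ _ h))
          · exact Or.inr ⟨hN, fun hc => h2 (mkpair _ _ _ _ hvg (pair2 _ _ _ _ hc))⟩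
        · rintro (h | ⟨hN, hne⟩)
          · exact Or.inl (mkpair _ _ _ _ hvg (pair2 _ _ _ _ h))
          · refine Or.inr ⟨hN, ?_, ?_, ?_⟩
            · exact fun hc => hne (mkpair _ _ _ _ rfl (pair2 _ _ _ _ hc))
            · exact fun hc => hvp (pair1 _ _ _ _ hc)
            · exact fun hc => hvp (pair1 _ _ _ _ hc)
      · have heq : M.arcs.filter (fun e => e.1 = v) = N.arcs.filter (fun e => e.1 = v) := by
          apply filter_eq_of_mem_iff
          rintro ⟨u,w⟩ (hP : u = v)
          subst hP
          rw [hMarc]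
          constructor
          · rintro (h | ⟨hN, _, _, _⟩)
            · exact (hvg (pair1 _ _ _ _ h)).elim
            · exact hN
          · intro hN
            refine Or.inr ⟨hN, ?_, ?_, ?_⟩
            · exact fun hc => hvg (pair1 _ _ _ _ hc)
            · exact fun hc => hvp (pair1 _ _ _ _ hc)
            · exact fun hc => hvp (pair1 _ _ _ _ hc)
        rw [heq]
    have hin_pres : ∀ v, v ≠ a → v ≠ p → M.inDeg v = N.inDeg v := by
      intro v hva hvp
      unfold DNet.inDeg
      by_cases hvb : v = b
      · refine filter_card_swap (f := (g,v)) (e := (p,v)) ?_ rfl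
          (by rw [hvb]; exact hgbarc) (by rw [hvb]; exact hpb) rfl
        rintro ⟨u,w⟩ (hP : w = v)
        subst hP
        rw [hMarc]
        constructor
        · rintro (h | ⟨hN, _, _, h4⟩)
          · exact Or.inl (mkpair _ _ _ _ (pair1 _ _ _ _ h) rfl)
          · exact Or.inr ⟨hN, fun hc => h4 (mkpair _ _ _ _ (pair1 _ _ _ _ hc) hvb)⟩
        · rintro (h | ⟨hN, hne⟩)
          · exact Or.inl (mkpair _ _ _ _ (pair1 _ _ _ _ h) hvb)
          · refine Or.inr ⟨hN, ?_, ?_, ?_⟩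
            · exact fun hc => hvp (pair2 _ _ _ _ hc)
            · exact fun hc => hva (pair2 _ _ _ _ hc)
            · exact fun hc => hne (mkpair _ _ _ _ (pair1 _ _ _ _ hc) rfl)
      · have heq : M.arcs.filter (fun e => e.2 = v) = N.arcs.filter (fun e => e.2 = v) := by
          apply filter_eq_of_mem_iff
          rintro ⟨u,w⟩ (hP : w = v)
          subst hP
          rw [hMarc]
          constructor
          · rintro (h | ⟨hN, _, _, _⟩)
            · exact (hvb (pair2 _ _ _ _ h)).elim
            · exact hN
          · intro hN
            refine Or.inr ⟨hN, ?_, ?_, ?_⟩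
            · exact fun hc => hvp (pair2 _ _ _ _ hc)
            · exact fun hc => hva (pair2 _ _ _ _ hc)
            · exact fun hc => hvb (pair2 _ _ _ _ hc)
        rw [heq]
    have hba : b ≠ a := fun h => hab h.symm
    have hbp : b ≠ p := fun h => hpb_ne h.symm
    -- arcs of M lie in verts of M
    have harcM : ∀ e ∈ M.arcs, e.1 ∈ M.verts ∧ e.2 ∈ M.verts := by
      rintro ⟨u,v⟩ he
      rw [hMarc] at he
      rcases he with he | ⟨hN, h2, h3, h4⟩
      · rw [(by exact pair1 _ _ _ _ he : u = g), (by exact pair2 _ _ _ _ he : v = b)]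
        exact ⟨(hMmem g).2 ⟨hgv, hga, hgne_p⟩, (hMmem b).2 ⟨hb.1, hba, hbp⟩⟩
      · have hu : u ∈ N.verts := (harc _ hN).1
        have hv : v ∈ N.verts := (harc _ hN).2
        refine ⟨(hMmem u).2 ⟨hu, ?_, ?_⟩, (hMmem v).2 ⟨hv, ?_, ?_⟩⟩
        · rintro rfl; exact outDeg_zero haout v hN
        · rintro rfl
          rcases hchildren v hN with rfl|rfl
          · exact h3 rfl
          · exact h4 rfl
        · rintro rfl; exact h3 (mkpair _ _ _ _ (hauniq u hN) rfl)
        · rintro rfl; exact h2 (mkpair _ _ _ _ (hpuniq u hN) rfl)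
    -- acyclicity
    have hacM : M.Acyclic := by
      apply acyclic_of_mono hac
      rintro ⟨u,v⟩ he
      rw [hMarc] at he
      rcases he with he | ⟨hN, _, _, _⟩
      · rw [(by exact pair1 _ _ _ _ he : u = g), (by exact pair2 _ _ _ _ he : v = b)]
        exact (Relation.TransGen.single hgp).tail hpb
      · exact Relation.TransGen.single hN
    -- unique root
    have hρa : ρ ≠ a := fun h => by rw [h] at hρ0; omega
    have hρp : ρ ≠ p := fun h => by rw [h] at hρ0; omega
    have hrootM : ∃! r, r ∈ M.verts ∧ M.inDeg r = 0 := by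
      refine ⟨ρ, ⟨(hMmem ρ).2 ⟨hρv, hρa, hρp⟩, by rw [hin_pres ρ hρa hρp]; exact hρ0⟩, ?_⟩
      rintro y ⟨hyv, hy0⟩
      obtain ⟨hyN, hya, hyp⟩ := (hMmem y).1 hyv
      exact hρu y ⟨hyN, by rw [hin_pres y hya hyp] at hy0; exact hy0⟩
    -- classification
    have hclassM : ∀ v ∈ M.verts, M.IsRoot v ∨ M.IsLeaf v ∨ M.IsTreeVertex v ∨ M.IsRet v := by
      intro v hv
      obtain ⟨hvN, hva, hvp⟩ := (hMmem v).1 hv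
      have hi := hin_pres v hva hvp
      have ho := hout_pres v hvp
      rcases hclass v hvN with h|h|h|h
      · exact Or.inl ⟨hv, by rw [hi]; exact h.2.1, by rw [ho]; exact h.2.2⟩
      · exact Or.inr (Or.inl ⟨hv, by rw [hi]; exact h.2.1, by rw [ho]; exact h.2.2⟩)
      · exact Or.inr (Or.inr (Or.inl ⟨hv, by rw [hi]; exact h.2.1, by rw [ho]; exact h.2.2⟩))
      · exact Or.inr (Or.inr (Or.inr ⟨hv, by rw [hi]; exact h.2.1, by rw [ho]; exact h.2.2⟩))
    -- tree-child
    have htcM : M.TreeChild := by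
      intro v hv hvout
      obtain ⟨hvN, hva, hvp⟩ := (hMmem v).1 hv
      have ho := hout_pres v hvp
      rw [ho] at hvout
      obtain ⟨c, hvc, hgood⟩ := htc v hvN hvout
      by_cases hcp : c = p
      · have hvg : v = g := hpuniq v (hcp ▸ hvc)
        refine ⟨b, ?_, Or.inr ?_⟩
        · rw [hMarc]; exact Or.inl (mkpair _ _ _ _ hvg rfl)
        · exact ⟨(hMmem b).2 ⟨hb.1, hba, hbp⟩, by rw [hin_pres b hba hbp]; exact hbin,
            by rw [hout_pres b hbp]; exact hbout⟩
      · by_cases hca : c = a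
        · exact absurd (hauniq v (hca ▸ hvc)) hvp
        · have hcM : c ∈ M.verts := (hMmem c).2 ⟨(harc _ hvc).2, hca, hcp⟩
          refine ⟨c, ?_, ?_⟩
          · rw [hMarc]
            refine Or.inr ⟨hvc, ?_, ?_, ?_⟩
            · exact fun hc => hcp (pair2 _ _ _ _ hc)
            · exact fun hc => hvp (pair1 _ _ _ _ hc)
            · exact fun hc => hvp (pair1 _ _ _ _ hc)
          · rcases hgood with h|h
            · exact Or.inl ⟨hcM, by rw [hin_pres c hca hcp]; exact h.2.1,
                by rw [hout_pres c hcp]; exact h.2.2⟩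
            · exact Or.inr ⟨hcM, by rw [hin_pres c hca hcp]; exact h.2.1,
                by rw [hout_pres c hcp]; exact h.2.2⟩
    refine ⟨⟨htcM, Or.inr ⟨harcM, hacM, hrootM, hclassM⟩⟩, ?_⟩
    -- shield transfer
    intro x q hsh hxa hxb
    obtain ⟨hxleaf, hqx, hqin, hqch⟩ := hsh
    have hxv := hxleaf.1
    have hxin : N.inDeg x = 1 := hxleaf.2.1
    have hxout : N.outDeg x = 0 := hxleaf.2.2
    have hxp : x ≠ p := fun h => by rw [h] at hxout; omega
    have hqa : q ≠ a := fun h => outDeg_zero haout x (h ▸ hqx)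
    have hqp : q ≠ p := by
      intro h
      rcases hchildren x (h ▸ hqx) with rfl|rfl
      · exact hxa rfl
      · exact hxb rfl
    refine ⟨⟨(hMmem x).2 ⟨hxv, hxa, hxp⟩, by rw [hin_pres x hxa hxp]; exact hxin,
        by rw [hout_pres x hxp]; exact hxout⟩, ?_, ?_, ?_⟩
    · rw [hMarc]
      refine Or.inr ⟨hqx, ?_, ?_, ?_⟩
      · exact fun hc => hxp (pair2 _ _ _ _ hc)
      · exact fun hc => hqp (pair1 _ _ _ _ hc)
      · exact fun hc => hqp (pair1 _ _ _ _ hc)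
    · rw [hin_pres q hqa hqp]; exact hqin
    · intro c hc
      rw [hMarc] at hc
      rcases hc with hc | ⟨hN, h2, _, _⟩
      · rw [(by exact pair2 _ _ _ _ hc : c = b), hin_pres b hba hbp, hbin]
      · have hca : c ≠ a := fun h => hqp (hauniq q (h ▸ hN))
        have hcp : c ≠ p := fun h => h2 (mkpair _ _ _ _ (hpuniq q (h ▸ hN)) h)
        rw [hin_pres c hca hcp]
        exact hqch c hN
end TCCherry

section TCRet
open Finset Relation DNet

theorem ret_step_analysis {N M : DNet} {a b : ℕ} (hG : Good N) (hs : RReduceRetCherry N M a b) :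
    Good M ∧ (∀ x q, Shielded N x q → x ≠ a → x ≠ b → Shielded M x q) ∧
    (∃ q, Shielded M a q ∧ ∃ p', (q, p') ∈ N.arcs ∧ N.inDeg p' = 2) := by
  classical
  obtain ⟨htc, hcase⟩ := hG
  obtain ⟨⟨hab, ha, hb, _⟩, pa, pb, qa, qb, hpaa, hpbb, hpar, hpbpa, hqapa, hqanepb,
    hqbpb, hMv, hMa⟩ := hs
  rcases hcase with ⟨x0, hv0, ha0⟩ | hnd
  · rw [ha0] at hpaa; exact absurd hpaa (Finset.notMem_empty _)
  obtain ⟨harc, hac, ⟨ρ, ⟨hρv, hρ0⟩, hρu⟩, hclass⟩ := hnd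
  have hirr : ∀ u : ℕ, (u,u) ∉ N.arcs := fun u => hac.irrefl
  have pair1 : ∀ (u w x y : ℕ), (u,w) = ((x,y) : ℕ×ℕ) → u = x := by
    intro u w x y h; rw [Prod.mk.injEq] at h; exact h.1
  have pair2 : ∀ (u w x y : ℕ), (u,w) = ((x,y) : ℕ×ℕ) → w = y := by
    intro u w x y h; rw [Prod.mk.injEq] at h; exact h.2
  have mkpair : ∀ (u w x y : ℕ), u = x → w = y → (u,w) = ((x,y) : ℕ×ℕ) := by
    intro u w x y h1 h2; rw [Prod.mk.injEq]; exact ⟨h1, h2⟩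
  have hain : N.inDeg a = 1 := ha.2.1
  have haout : N.outDeg a = 0 := ha.2.2
  have hbin : N.inDeg b = 1 := hb.2.1
  have hbout : N.outDeg b = 0 := hb.2.2
  have hpain : N.inDeg pa = 2 := hpar.2.1
  have hpaout : N.outDeg pa = 1 := hpar.2.2
  have hpav : pa ∈ N.verts := hpar.1
  have hpbv : pb ∈ N.verts := (harc _ hpbb).1
  have hqav : qa ∈ N.verts := (harc _ hqapa).1
  have hqbv : qb ∈ N.verts := (harc _ hqbpb).1
  have hpachild : ∀ e, (pa,e) ∈ N.arcs → e = a := fun e he => child_unique hpaout he hpaa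
  have hauniq : ∀ u, (u,a) ∈ N.arcs → u = pa := fun u hu => parent_unique hain hu hpaa
  have hbuniq : ∀ u, (u,b) ∈ N.arcs → u = pb := fun u hu => parent_unique hbin hu hpbb
  have hpaparents : ∀ u, (u,pa) ∈ N.arcs → u = pb ∨ u = qa := by
    obtain ⟨c, d, hcd, hc, hd, hall⟩ := inDeg_two_parents hpain
    intro u hu
    rcases hall u hu with rfl|rfl <;> rcases hall pb hpbpa with h1|h1 <;>
      rcases hall qa hqapa with h2|h2 <;> omega
  have hpb_pa : pb ≠ pa := fun h => hirr pa (by rw [h] at hpbpa; exact hpbpa)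
  have hqa_pa : qa ≠ pa := fun h => hirr pa (by rw [h] at hqapa; exact hqapa)
  have hqb_pb : qb ≠ pb := fun h => hirr pb (by rw [h] at hqbpb; exact hqbpb)
  have hpa_a : pa ≠ a := fun h => outDeg_zero haout a (by rw [h] at hpaa; exact hpaa)
  have hpa_b : pa ≠ b := fun h => outDeg_zero hbout a (by rw [h] at hpaa; exact hpaa)
  have hpb_a : pb ≠ a := fun h => outDeg_zero haout b (by rw [h] at hpbb; exact hpbb)
  have hpb_b : pb ≠ b := fun h => hirr b (by rw [h] at hpbb; exact hpbb)
  have hqa_a : qa ≠ a := fun h => outDeg_zero haout pa (by rw [h] at hqapa; exact hqapa)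
  have hqa_b : qa ≠ b := fun h => outDeg_zero hbout pa (by rw [h] at hqapa; exact hqapa)
  have hqb_a : qb ≠ a := fun h => outDeg_zero haout pb (by rw [h] at hqbpb; exact hqbpb)
  have hqb_b : qb ≠ b := fun h => outDeg_zero hbout pb (by rw [h] at hqbpb; exact hqbpb)
  have hb_ne_pa : b ≠ pa := fun h => hpa_b h.symm
  have hpbout2 : N.outDeg pb = 2 := by
    have h2 := two_le_outDeg hpbb hpbpa hb_ne_pa
    rcases hclass pb hpbv with h|h|h|h
    · exact h.2.2
    · have := h.2.2; omega
    · exact h.2.2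
    · have := h.2.2; omega
  have hpbchildren : ∀ e, (pb,e) ∈ N.arcs → e = b ∨ e = pa := by
    obtain ⟨c, d, hcd, hc, hd, hall⟩ := outDeg_two_children hpbout2
    intro e he
    rcases hall e he with rfl|rfl <;> rcases hall b hpbb with h1|h1 <;>
      rcases hall pa hpbpa with h2|h2 <;> omega
  have hpbin : N.inDeg pb = 1 := by
    have h1 := inDeg_pos hqbpb
    rcases hclass pb hpbv with h|h|h|h
    · have := h.2.1; omega
    · have := h.2.2; omega
    · exact h.2.1
    · have := h.2.2; omega
  have hpbuniq : ∀ u, (u,pb) ∈ N.arcs → u = qb := fun u hu => parent_unique hpbin hu hqbpb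
  have hqaa_arc : (qa,a) ∉ N.arcs := fun h => hqa_pa (hauniq qa h)
  have hqbb_arc : (qb,b) ∉ N.arcs := fun h => hqb_pb (hbuniq qb h)
  have hqa_tree : N.inDeg qa ≤ 1 ∧ N.outDeg qa = 2 := by
    have hqout : N.outDeg qa ≠ 0 := by have := outDeg_pos hqapa; omega
    rcases hclass qa hqav with h|h|h|h
    · have := h.2.1; exact ⟨by omega, h.2.2⟩
    · exact absurd h.2.2 hqout
    · have := h.2.1; exact ⟨by omega, h.2.2⟩
    · exfalso
      obtain ⟨cg, hcg, hgood⟩ := htc qa hqav hqout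
      have hcgpa : cg = pa := child_unique h.2.2 hcg hqapa
      rw [hcgpa] at hgood
      rcases hgood with hg|hg
      · have h1 := hg.2.2; omega
      · have h1 := hg.2.2; omega
  have hqa_other : ∀ c, (qa,c) ∈ N.arcs → c ≠ pa → N.inDeg c = 1 := by
    intro c hc hcpa
    obtain ⟨cg, hcg, hgood⟩ := htc qa hqav (by have := hqa_tree.2; omega)
    have hcgpa : cg ≠ pa := by
      rintro rfl
      rcases hgood with h|h
      · have h1 := h.2.2; omega
      · have h1 := h.2.2; omega
    obtain ⟨c1, c2, h12, hc1, hc2, hall⟩ := outDeg_two_children hqa_tree.2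
    have e1 := hall c hc
    have e2 := hall cg hcg
    have e3 := hall pa hqapa
    have hceq : c = cg := by omega
    rw [hceq]
    rcases hgood with h|h
    · exact h.2.1
    · exact h.2.1
  have hMmem : ∀ v, v ∈ M.verts ↔ v ∈ N.verts ∧ v ≠ pa ∧ v ≠ pb := by
    intro v
    rw [hMv]
    simp only [Finset.mem_sdiff, Finset.mem_insert, Finset.mem_singleton, not_or]
  have hMarc : ∀ e : ℕ×ℕ, e ∈ M.arcs ↔ e = (qa,a) ∨ e = (qb,b) ∨
      (e ∈ N.arcs ∧ e ≠ (pb,pa) ∧ e ≠ (pa,a) ∧ e ≠ (qa,pa) ∧ e ≠ (pb,b) ∧ e ≠ (qb,pb)) := by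
    intro e
    rw [hMa]
    simp only [Finset.mem_insert, Finset.mem_sdiff, Finset.mem_singleton, not_or]
  -- degree preservation
  have hin_pres : ∀ v, v ≠ pa → v ≠ pb → M.inDeg v = N.inDeg v := by
    intro v hvpa hvpb
    unfold DNet.inDeg
    by_cases hva : v = a
    · refine filter_card_swap (f := (qa,v)) (e := (pa,v)) ?_ rfl
        (by rw [hva]; exact hqaa_arc) (by rw [hva]; exact hpaa) rfl
      rintro ⟨u,w⟩ (hP : w = v)
      subst hP
      rw [hMarc]
      constructor
      · rintro (h | h | ⟨hN, h1, h2, h3, h4, h5⟩)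
        · exact Or.inl (mkpair _ _ _ _ (pair1 _ _ _ _ h) rfl)
        · exact absurd ((pair2 _ _ _ _ h).symm.trans hva) (fun hc => hab hc.symm)
        · exact Or.inr ⟨hN, fun hc => h2 (mkpair _ _ _ _ (pair1 _ _ _ _ hc) hva)⟩
      · rintro (h | ⟨hN, hne⟩)
        · exact Or.inl (mkpair _ _ _ _ (pair1 _ _ _ _ h) hva)
        · refine Or.inr (Or.inr ⟨hN, ?_, ?_, ?_, ?_, ?_⟩)
          · exact fun hc => hvpa ((pair2 _ _ _ _ hc))
          · exact fun hc => hne (mkpair _ _ _ _ (pair1 _ _ _ _ hc) rfl)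
          · exact fun hc => hvpa ((pair2 _ _ _ _ hc))
          · exact fun hc => hab (hva.symm.trans (pair2 _ _ _ _ hc))
          · exact fun hc => hvpb ((pair2 _ _ _ _ hc))
    · by_cases hvb : v = b
      · refine filter_card_swap (f := (qb,v)) (e := (pb,v)) ?_ rfl
          (by rw [hvb]; exact hqbb_arc) (by rw [hvb]; exact hpbb) rfl
        rintro ⟨u,w⟩ (hP : w = v)
        subst hP
        rw [hMarc]
        constructor
        · rintro (h | h | ⟨hN, h1, h2, h3, h4, h5⟩)
          · exact absurd ((pair2 _ _ _ _ h).symm.trans hvb) hab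
          · exact Or.inl (mkpair _ _ _ _ (pair1 _ _ _ _ h) rfl)
          · exact Or.inr ⟨hN, fun hc => h4 (mkpair _ _ _ _ (pair1 _ _ _ _ hc) hvb)⟩
        · rintro (h | ⟨hN, hne⟩)
          · exact Or.inr (Or.inl (mkpair _ _ _ _ (pair1 _ _ _ _ h) hvb))
          · refine Or.inr (Or.inr ⟨hN, ?_, ?_, ?_, ?_, ?_⟩)
            · exact fun hc => hvpa ((pair2 _ _ _ _ hc))
            · exact fun hc => hva ((pair2 _ _ _ _ hc))
            · exact fun hc => hvpa ((pair2 _ _ _ _ hc))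
            · exact fun hc => hne (mkpair _ _ _ _ (pair1 _ _ _ _ hc) rfl)
            · exact fun hc => hvpb ((pair2 _ _ _ _ hc))
      · have heq : M.arcs.filter (fun e => e.2 = v) = N.arcs.filter (fun e => e.2 = v) := by
          apply filter_eq_of_mem_iff
          rintro ⟨u,w⟩ (hP : w = v)
          subst hP
          rw [hMarc]
          constructor
          · rintro (h | h | ⟨hN, _, _, _, _, _⟩)
            · exact (hva (pair2 _ _ _ _ h)).elim
            · exact (hvb (pair2 _ _ _ _ h)).elim
            · exact hN
          · intro hN
            refine Or.inr (Or.inr ⟨hN, ?_, ?_, ?_, ?_, ?_⟩)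
            · exact fun hc => hvpa ((pair2 _ _ _ _ hc))
            · exact fun hc => hva ((pair2 _ _ _ _ hc))
            · exact fun hc => hvpa ((pair2 _ _ _ _ hc))
            · exact fun hc => hvb ((pair2 _ _ _ _ hc))
            · exact fun hc => hvpb ((pair2 _ _ _ _ hc))
        rw [heq]
  have hout_pres : ∀ v, v ≠ pa → v ≠ pb → M.outDeg v = N.outDeg v := by
    intro v hvpa hvpb
    unfold DNet.outDeg
    by_cases hvqa : v = qa
    · by_cases hvqb : v = qb
      · -- qa = qb
        refine filter_card_swap2 (f1 := (v,a)) (f2 := (v,b)) (e1 := (v,pa)) (e2 := (v,pb))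
          ?_ rfl rfl (by rw [hvqa]; exact hqaa_arc) (by rw [hvqb]; exact hqbb_arc)
          (fun hc => hab (pair2 _ _ _ _ hc))
          (by rw [hvqa]; exact hqapa) (by rw [hvqb]; exact hqbpb) rfl rfl
          (fun hc => hpb_pa ((pair2 _ _ _ _ hc).symm))
        rintro ⟨u,w⟩ (hP : u = v)
        subst hP
        rw [hMarc]
        constructor
        · rintro (h | h | ⟨hN, h1, h2, h3, h4, h5⟩)
          · exact Or.inl (mkpair _ _ _ _ rfl (pair2 _ _ _ _ h))
          · exact Or.inr (Or.inl (mkpair _ _ _ _ rfl (pair2 _ _ _ _ h)))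
          · refine Or.inr (Or.inr ⟨hN, ?_, ?_⟩)
            · exact fun hc => h3 (mkpair _ _ _ _ hvqa (pair2 _ _ _ _ hc))
            · exact fun hc => h5 (mkpair _ _ _ _ hvqb (pair2 _ _ _ _ hc))
        · rintro (h | h | ⟨hN, hne1, hne2⟩)
          · exact Or.inl (mkpair _ _ _ _ hvqa (pair2 _ _ _ _ h))
          · exact Or.inr (Or.inl (mkpair _ _ _ _ hvqb (pair2 _ _ _ _ h)))
          · refine Or.inr (Or.inr ⟨hN, ?_, ?_, ?_, ?_, ?_⟩)
            · exact fun hc => hvpb ((pair1 _ _ _ _ hc))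
            · exact fun hc => hvpa ((pair1 _ _ _ _ hc))
            · exact fun hc => hne1 (mkpair _ _ _ _ rfl (pair2 _ _ _ _ hc))
            · exact fun hc => hvpb ((pair1 _ _ _ _ hc))
            · exact fun hc => hne2 (mkpair _ _ _ _ rfl (pair2 _ _ _ _ hc))
      · -- v = qa, v ≠ qb
        refine filter_card_swap (f := (v,a)) (e := (v,pa)) ?_ rfl
          (by rw [hvqa]; exact hqaa_arc) (by rw [hvqa]; exact hqapa) rfl
        rintro ⟨u,w⟩ (hP : u = v)
        subst hP
        rw [hMarc]
        constructor
        · rintro (h | h | ⟨hN, h1, h2, h3, h4, h5⟩)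
          · exact Or.inl (mkpair _ _ _ _ rfl (pair2 _ _ _ _ h))
          · exact (hvqb (pair1 _ _ _ _ h)).elim
          · exact Or.inr ⟨hN, fun hc => h3 (mkpair _ _ _ _ hvqa (pair2 _ _ _ _ hc))⟩
        · rintro (h | ⟨hN, hne⟩)
          · exact Or.inl (mkpair _ _ _ _ hvqa (pair2 _ _ _ _ h))
          · refine Or.inr (Or.inr ⟨hN, ?_, ?_, ?_, ?_, ?_⟩)
            · exact fun hc => hvpb ((pair1 _ _ _ _ hc))
            · exact fun hc => hvpa ((pair1 _ _ _ _ hc))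
            · exact fun hc => hne (mkpair _ _ _ _ rfl (pair2 _ _ _ _ hc))
            · exact fun hc => hvpb ((pair1 _ _ _ _ hc))
            · exact fun hc => hvqb ((pair1 _ _ _ _ hc))
    · by_cases hvqb : v = qb
      · refine filter_card_swap (f := (v,b)) (e := (v,pb)) ?_ rfl
          (by rw [hvqb]; exact hqbb_arc) (by rw [hvqb]; exact hqbpb) rfl
        rintro ⟨u,w⟩ (hP : u = v)
        subst hP
        rw [hMarc]
        constructor
        · rintro (h | h | ⟨hN, h1, h2, h3, h4, h5⟩)
          · exact (hvqa (pair1 _ _ _ _ h)).elim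
          · exact Or.inl (mkpair _ _ _ _ rfl (pair2 _ _ _ _ h))
          · exact Or.inr ⟨hN, fun hc => h5 (mkpair _ _ _ _ hvqb (pair2 _ _ _ _ hc))⟩
        · rintro (h | ⟨hN, hne⟩)
          · exact Or.inr (Or.inl (mkpair _ _ _ _ hvqb (pair2 _ _ _ _ h)))
          · refine Or.inr (Or.inr ⟨hN, ?_, ?_, ?_, ?_, ?_⟩)
            · exact fun hc => hvpb ((pair1 _ _ _ _ hc))
            · exact fun hc => hvpa ((pair1 _ _ _ _ hc))
            · exact fun hc => hvqa ((pair1 _ _ _ _ hc))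
            · exact fun hc => hvpb ((pair1 _ _ _ _ hc))
            · exact fun hc => hne (mkpair _ _ _ _ rfl (pair2 _ _ _ _ hc))
      · have heq : M.arcs.filter (fun e => e.1 = v) = N.arcs.filter (fun e => e.1 = v) := by
          apply filter_eq_of_mem_iff
          rintro ⟨u,w⟩ (hP : u = v)
          subst hP
          rw [hMarc]
          constructor
          · rintro (h | h | ⟨hN, _, _, _, _, _⟩)
            · exact (hvqa (pair1 _ _ _ _ h)).elim
            · exact (hvqb (pair1 _ _ _ _ h)).elim
            · exact hN
          · intro hN
            refine Or.inr (Or.inr ⟨hN, ?_, ?_, ?_, ?_, ?_⟩)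
            · exact fun hc => hvpb ((pair1 _ _ _ _ hc))
            · exact fun hc => hvpa ((pair1 _ _ _ _ hc))
            · exact fun hc => hvqa ((pair1 _ _ _ _ hc))
            · exact fun hc => hvpb ((pair1 _ _ _ _ hc))
            · exact fun hc => hvqb ((pair1 _ _ _ _ hc))
        rw [heq]
  have ha_ne_pa : a ≠ pa := fun h => hpa_a h.symm
  have ha_ne_pb : a ≠ pb := fun h => hpb_a h.symm
  have hb_ne_pb : b ≠ pb := fun h => hpb_b h.symm
  have hqa_ne_pa : qa ≠ pa := hqa_pa
  have hqb_ne_pa : qb ≠ pa := by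
    intro h
    have := hpachild pb (by rw [← h]; exact hqbpb)
    exact hpb_a this
  -- arcs of M lie in verts of M
  have harcM : ∀ e ∈ M.arcs, e.1 ∈ M.verts ∧ e.2 ∈ M.verts := by
    rintro ⟨u,v⟩ he
    rw [hMarc] at he
    rcases he with he | he | ⟨hN, h1, h2, h3, h4, h5⟩
    · rw [(by exact pair1 _ _ _ _ he : u = qa), (by exact pair2 _ _ _ _ he : v = a)]
      exact ⟨(hMmem qa).2 ⟨hqav, hqa_pa, hqanepb⟩, (hMmem a).2 ⟨ha.1, ha_ne_pa, ha_ne_pb⟩⟩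
    · rw [(by exact pair1 _ _ _ _ he : u = qb), (by exact pair2 _ _ _ _ he : v = b)]
      exact ⟨(hMmem qb).2 ⟨hqbv, hqb_ne_pa, hqb_pb⟩, (hMmem b).2 ⟨hb.1, hb_ne_pa, hb_ne_pb⟩⟩
    · have hu : u ∈ N.verts := (harc _ hN).1
      have hv : v ∈ N.verts := (harc _ hN).2
      refine ⟨(hMmem u).2 ⟨hu, ?_, ?_⟩, (hMmem v).2 ⟨hv, ?_, ?_⟩⟩
      · rintro rfl; exact h2 (mkpair _ _ _ _ rfl (hpachild v hN))
      · rintro rfl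
        rcases hpbchildren v hN with rfl|rfl
        · exact h4 rfl
        · exact h1 rfl
      · rintro rfl
        rcases hpaparents u hN with rfl|rfl
        · exact h1 rfl
        · exact h3 rfl
      · rintro rfl; exact h5 (mkpair _ _ _ _ (hpbuniq u hN) rfl)
  -- acyclicity
  have hacM : M.Acyclic := by
    apply acyclic_of_mono hac
    rintro ⟨u,v⟩ he
    rw [hMarc] at he
    rcases he with he | he | ⟨hN, _, _, _, _, _⟩
    · rw [(by exact pair1 _ _ _ _ he : u = qa), (by exact pair2 _ _ _ _ he : v = a)]
      exact (Relation.TransGen.single hqapa).tail hpaa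
    · rw [(by exact pair1 _ _ _ _ he : u = qb), (by exact pair2 _ _ _ _ he : v = b)]
      exact (Relation.TransGen.single hqbpb).tail hpbb
    · exact Relation.TransGen.single hN
  -- unique root
  have hρpa : ρ ≠ pa := fun h => by rw [h] at hρ0; omega
  have hρpb : ρ ≠ pb := fun h => by rw [h] at hρ0; omega
  have hrootM : ∃! r, r ∈ M.verts ∧ M.inDeg r = 0 := by
    refine ⟨ρ, ⟨(hMmem ρ).2 ⟨hρv, hρpa, hρpb⟩, by rw [hin_pres ρ hρpa hρpb]; exact hρ0⟩, ?_⟩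
    rintro y ⟨hyv, hy0⟩
    obtain ⟨hyN, hypa, hypb⟩ := (hMmem y).1 hyv
    exact hρu y ⟨hyN, by rw [hin_pres y hypa hypb] at hy0; exact hy0⟩
  -- classification
  have hclassM : ∀ v ∈ M.verts, M.IsRoot v ∨ M.IsLeaf v ∨ M.IsTreeVertex v ∨ M.IsRet v := by
    intro v hv
    obtain ⟨hvN, hvpa, hvpb⟩ := (hMmem v).1 hv
    have hi := hin_pres v hvpa hvpb
    have ho := hout_pres v hvpa hvpb
    rcases hclass v hvN with h|h|h|h
    · exact Or.inl ⟨hv, by rw [hi]; exact h.2.1, by rw [ho]; exact h.2.2⟩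
    · exact Or.inr (Or.inl ⟨hv, by rw [hi]; exact h.2.1, by rw [ho]; exact h.2.2⟩)
    · exact Or.inr (Or.inr (Or.inl ⟨hv, by rw [hi]; exact h.2.1, by rw [ho]; exact h.2.2⟩))
    · exact Or.inr (Or.inr (Or.inr ⟨hv, by rw [hi]; exact h.2.1, by rw [ho]; exact h.2.2⟩))
  -- tree-child
  have hbleafM : M.IsLeaf b :=
    ⟨(hMmem b).2 ⟨hb.1, hb_ne_pa, hb_ne_pb⟩,
      by rw [hin_pres b hb_ne_pa hb_ne_pb]; exact hbin,
      by rw [hout_pres b hb_ne_pa hb_ne_pb]; exact hbout⟩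
  have haleafM : M.IsLeaf a :=
    ⟨(hMmem a).2 ⟨ha.1, ha_ne_pa, ha_ne_pb⟩,
      by rw [hin_pres a ha_ne_pa ha_ne_pb]; exact hain,
      by rw [hout_pres a ha_ne_pa ha_ne_pb]; exact haout⟩
  have htcM : M.TreeChild := by
    intro v hv hvout
    obtain ⟨hvN, hvpa, hvpb⟩ := (hMmem v).1 hv
    have ho := hout_pres v hvpa hvpb
    rw [ho] at hvout
    obtain ⟨c, hvc, hgood⟩ := htc v hvN hvout
    by_cases hcpa : c = pa
    · exfalso
      rw [hcpa] at hgood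
      rcases hgood with h|h
      · have h1 := h.2.2; omega
      · have h1 := h.2.2; omega
    · by_cases hcpb : c = pb
      · have hvqb : v = qb := hpbuniq v (hcpb ▸ hvc)
        refine ⟨b, ?_, Or.inr hbleafM⟩
        rw [hMarc]
        exact Or.inr (Or.inl (mkpair _ _ _ _ hvqb rfl))
      · by_cases hca : c = a
        · exact absurd (hauniq v (hca ▸ hvc)) hvpa
        · by_cases hcb : c = b
          · exact absurd (hbuniq v (hcb ▸ hvc)) hvpb
          · have hcM : c ∈ M.verts := (hMmem c).2 ⟨(harc _ hvc).2, hcpa, hcpb⟩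
            refine ⟨c, ?_, ?_⟩
            · rw [hMarc]
              refine Or.inr (Or.inr ⟨hvc, ?_, ?_, ?_, ?_, ?_⟩)
              · exact fun hc => hcpa (pair2 _ _ _ _ hc)
              · exact fun hc => hca (pair2 _ _ _ _ hc)
              · exact fun hc => hcpa (pair2 _ _ _ _ hc)
              · exact fun hc => hcb (pair2 _ _ _ _ hc)
              · exact fun hc => hcpb (pair2 _ _ _ _ hc)
            · rcases hgood with h|h
              · exact Or.inl ⟨hcM, by rw [hin_pres c hcpa hcpb]; exact h.2.1,
                  by rw [hout_pres c hcpa hcpb]; exact h.2.2⟩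
              · exact Or.inr ⟨hcM, by rw [hin_pres c hcpa hcpb]; exact h.2.1,
                  by rw [hout_pres c hcpa hcpb]; exact h.2.2⟩
  refine ⟨⟨htcM, Or.inr ⟨harcM, hacM, hrootM, hclassM⟩⟩, ?_, ?_⟩
  · -- shield transfer
    intro x q hsh hxa hxb
    obtain ⟨hxleaf, hqx, hqin, hqch⟩ := hsh
    have hxv := hxleaf.1
    have hxin : N.inDeg x = 1 := hxleaf.2.1
    have hxout : N.outDeg x = 0 := hxleaf.2.2
    have hxpa : x ≠ pa := fun h => by rw [h] at hxout; omega
    have hxpb : x ≠ pb := fun h => by rw [h] at hxout; omega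
    have hqpa : q ≠ pa := by
      intro h
      exact hxa (hpachild x (h ▸ hqx))
    have hqpb : q ≠ pb := by
      intro h
      rcases hpbchildren x (h ▸ hqx) with rfl|rfl
      · exact hxb rfl
      · exact hxpa rfl
    refine ⟨⟨(hMmem x).2 ⟨hxv, hxpa, hxpb⟩, by rw [hin_pres x hxpa hxpb]; exact hxin,
        by rw [hout_pres x hxpa hxpb]; exact hxout⟩, ?_, ?_, ?_⟩
    · rw [hMarc]
      refine Or.inr (Or.inr ⟨hqx, ?_, ?_, ?_, ?_, ?_⟩)
      · exact fun hc => hxpa (pair2 _ _ _ _ hc)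
      · exact fun hc => hxa (pair2 _ _ _ _ hc)
      · exact fun hc => hxpa (pair2 _ _ _ _ hc)
      · exact fun hc => hxb (pair2 _ _ _ _ hc)
      · exact fun hc => hxpb (pair2 _ _ _ _ hc)
    · rw [hin_pres q hqpa hqpb]; exact hqin
    · intro c hc
      rw [hMarc] at hc
      rcases hc with hc | hc | ⟨hN, h1, h2, h3, h4, h5⟩
      · rw [(by exact pair2 _ _ _ _ hc : c = a), hin_pres a ha_ne_pa ha_ne_pb, hain]
      · rw [(by exact pair2 _ _ _ _ hc : c = b), hin_pres b hb_ne_pa hb_ne_pb, hbin]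
      · have hle := hqch c hN
        have hcpa : c ≠ pa := fun h => by rw [h] at hle; omega
        have hcpb : c ≠ pb := fun h => h5 (mkpair _ _ _ _ (hpbuniq q (h ▸ hN)) h)
        rw [hin_pres c hcpa hcpb]
        exact hle
  · -- new shield for a at qa
    refine ⟨qa, ⟨haleafM, ?_, ?_, ?_⟩, pa, hqapa, hpain⟩
    · rw [hMarc]; exact Or.inl rfl
    · rw [hin_pres qa hqa_pa hqanepb]; exact hqa_tree.1
    · intro c hc
      rw [hMarc] at hc
      rcases hc with hc | hc | ⟨hN, h1, h2, h3, h4, h5⟩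
      · rw [(by exact pair2 _ _ _ _ hc : c = a), hin_pres a ha_ne_pa ha_ne_pb, hain]
      · rw [(by exact pair2 _ _ _ _ hc : c = b), hin_pres b hb_ne_pa hb_ne_pb, hbin]
      · have hcpa : c ≠ pa := fun h => h3 (mkpair _ _ _ _ rfl h)
        have hcpb : c ≠ pb := by
          intro h
          exact h5 (mkpair _ _ _ _ (hpbuniq qa (h ▸ hN)) h)
        rw [hin_pres c hcpa hcpb, hqa_other c hN hcpa]
end TCRet

section TCMain
open Finset Relation DNet

lemma good_single {N : DNet} (hG : Good N)
    (hmax : ∀ a b, ¬ RCherry N a b ∧ ¬ RRetCherry N a b) : N.SingleVertex := by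
  rcases hG.2 with ⟨x, hv, ha⟩ | hnd
  · exact ⟨by rw [hv]; exact Finset.card_singleton x, ha⟩
  · exfalso
    rcases exists_reducible hnd hG.1 with ⟨a,b,h⟩|⟨a,b,h⟩
    · exact (hmax a b).1 h
    · exact (hmax a b).2 h

lemma step_analysis {N M : DNet} {r : Pick} (hG : Good N) (hs : RStep N M r) :
    Good M ∧ (∀ x q, Shielded N x q → ¬ r.Contains x → Shielded M x q) := by
  cases r with
  | cherry a b =>
    obtain ⟨h1, h2⟩ := cherry_step_analysis hG hs
    refine ⟨h1, fun x q hsh hnc => h2 x q hsh ?_ ?_⟩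
    · exact fun h => hnc (Or.inl h.symm)
    · exact fun h => hnc (Or.inr h.symm)
  | ret a b =>
    obtain ⟨h1, h2, _⟩ := ret_step_analysis hG hs
    refine ⟨h1, fun x q hsh hnc => h2 x q hsh ?_ ?_⟩
    · exact fun h => hnc (Or.inl h.symm)
    · exact fun h => hnc (Or.inr h.symm)

theorem maximal_sequence_of_treeChild' (R : DNet) (X : Finset ℕ) (Ns : ℕ → DNet)
    (rs : ℕ → Pick) (k : ℕ) (hR : IsRootedBinaryNet R X) (htc : R.TreeChild)
    (hX : 2 ≤ X.card) (h0 : Ns 0 = R) (hseq : RCherrySeq Ns rs k)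
    (hmax : ∀ a b, ¬ RCherry (Ns k) a b ∧ ¬ RRetCherry (Ns k) a b) :
    (Ns k).SingleVertex ∧ TreeChildSeq rs k := by
  have hG0 : Good R := by
    refine ⟨htc, ?_⟩
    rcases hR with ⟨x, hX', hv, ha⟩ | ⟨h1, h2, h3, h4, h5, h6⟩
    · exact Or.inl ⟨x, hv, ha⟩
    · exact Or.inr ⟨h1, h3, h4, h5⟩
  have hGood : ∀ i, i ≤ k → Good (Ns i) := by
    intro i
    induction i with
    | zero => intro _; rw [h0]; exact hG0
    | succ n ih =>
      intro hle
      exact (step_analysis (ih (by omega)) (hseq n (by omega))).1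
  refine ⟨good_single (hGood k le_rfl) hmax, ?_⟩
  -- tracking lemma
  have track : ∀ i x y, rs i = .ret x y → i < k → ∀ j, i < j → j ≤ k →
      (∀ l, i < l → l < j → ¬ (rs l).Contains x) →
      ∃ q, (∀ m, i < m → m ≤ j → Shielded (Ns m) x q) ∧
        ∃ p', (q, p') ∈ (Ns i).arcs ∧ (Ns i).inDeg p' = 2 := by
    intro i x y hri hik j hij hjk hgap
    have hstep := hseq i hik
    rw [hri] at hstep
    obtain ⟨q, hq, hp'⟩ :=
      (ret_step_analysis (hGood i (le_of_lt hik)) hstep).2.2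
    refine ⟨q, ?_, hp'⟩
    intro m
    induction m with
    | zero => omega
    | succ n ih2 =>
      intro h1 h2
      by_cases hni : n = i
      · subst hni; exact hq
      · have hn1 : i < n := by omega
        have hs' := hseq n (by omega)
        exact (step_analysis (hGood n (by omega)) hs').2 x q
          (ih2 hn1 (by omega)) (hgap n hn1 (by omega))
  have hP1 : SeqP1 rs k := by
    intro i j hretpair hsucc
    obtain ⟨hij, hjk, hcont, hgap⟩ := hsucc
    cases hri : rs i with
    | cherry u v => rw [hri] at hretpair; exact hretpair.elim
    | ret x y =>
      have hfst : (rs i).fst = x := by rw [hri]; rfl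
      have hik : i < k := lt_trans hij hjk
      obtain ⟨q, hqall, _⟩ := track i x y hri hik j hij (le_of_lt hjk)
        (fun l h1 h2 => by rw [← hfst]; exact hgap l h1 h2)
      have hqsh : Shielded (Ns j) x q := hqall j hij le_rfl
      cases hrj : rs j with
      | cherry u v => trivial
      | ret u v =>
        exfalso
        have hstep := hseq j hjk
        rw [hrj] at hstep
        obtain ⟨⟨hab, hu, hv, _⟩, pa', pb', qa', qb', hpaa', hpbb', hpar', hpbpa',
          _, _, _, _, _⟩ := hstep
        obtain ⟨hxleaf, hqx, hqin, hqch⟩ := hqsh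
        rw [hfst, hrj] at hcont
        rcases hcont with h | h
        · -- u = x
          rw [show (Pick.ret u v).fst = u from rfl] at h
          rw [h] at hpaa'
          have hq : pa' = q := parent_unique hxleaf.2.1 hpaa' hqx
          rw [hq] at hpar'
          have h2 := hpar'.2.1
          omega
        · -- v = x
          rw [show (Pick.ret u v).snd = v from rfl] at h
          rw [h] at hpbb'
          have hq : pb' = q := parent_unique hxleaf.2.1 hpbb' hqx
          rw [hq] at hpbpa'
          have h1 := hqch pa' hpbpa'
          have h2 := hpar'.2.1
          omega
  have hP2 : SeqP2 rs k := by
    intro i i' j hne hr hr' hsucc hsucc'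
    wlog hlt : i < i' generalizing i i'
    · exact this i' i hne.symm hr' hr hsucc' hsucc (by omega)
    obtain ⟨hij, hjk, hcont, hgap⟩ := hsucc
    obtain ⟨hij', hjk', hcont', hgap'⟩ := hsucc'
    cases hri : rs i with
    | cherry u v => rw [hri] at hr; exact hr
    | ret x y =>
    cases hri' : rs i' with
    | cherry u v => rw [hri'] at hr'; exact hr'
    | ret x' y' =>
    have hfst : (rs i).fst = x := by rw [hri]; rfl
    have hfst' : (rs i').fst = x' := by rw [hri']; rfl
    have hnc : ¬ (rs i').Contains (rs i).fst := hgap i' hlt hij'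
    have hxx' : x ≠ x' := by
      rw [hfst, hri'] at hnc
      exact fun h => hnc (Or.inl h.symm)
    have hik : i < k := lt_trans hij hjk
    have hik' : i' < k := lt_trans hij' hjk'
    obtain ⟨q, hqall, _⟩ := track i x y hri hik j hij (le_of_lt hjk)
      (fun l h1 h2 => by rw [← hfst]; exact hgap l h1 h2)
    obtain ⟨q', hq'all, p'', hq'p, hp2⟩ := track i' x' y' hri' hik' j hij' (le_of_lt hjk')
      (fun l h1 h2 => by rw [← hfst']; exact hgap' l h1 h2)
    have hshi' : Shielded (Ns i') x q := hqall i' hlt (le_of_lt hij')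
    have hneq : q ≠ q' := by
      rintro rfl
      have := hshi'.2.2.2 p'' hq'p
      omega
    have hcherry := hP1 i j (by rw [hri]; trivial) ⟨hij, hjk, hcont, hgap⟩
    cases hrj : rs j with
    | ret u v => rw [hrj] at hcherry; exact hcherry
    | cherry u v =>
      have hstep := hseq j hjk
      rw [hrj] at hstep
      obtain ⟨⟨hab, hu, hv, p, hpu, hpv⟩, _⟩ := hstep
      have hshj : Shielded (Ns j) x q := hqall j hij le_rfl
      have hshj' : Shielded (Ns j) x' q' := hq'all j hij' le_rfl
      rw [hfst, hrj] at hcont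
      rw [hfst', hrj] at hcont'
      have hparent : ∀ z : ℕ, ((Pick.cherry u v).Contains z) → (p, z) ∈ (Ns j).arcs := by
        intro z hz
        rcases hz with h | h
        · rw [show (Pick.cherry u v).fst = u from rfl] at h
          rw [← h]; exact hpu
        · rw [show (Pick.cherry u v).snd = v from rfl] at h
          rw [← h]; exact hpv
      have h1 : p = q := parent_unique hshj.1.2.1 (hparent x hcont) hshj.2.1
      have h2 : p = q' := parent_unique hshj'.1.2.1 (hparent x' hcont') hshj'.2.1
      exact hneq (h1 ▸ h2 ▸ rfl)
  exact ⟨hP1, hP2⟩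
end TCMain

/-- For a rooted binary tree-child network on `X` with `|X| ≥ 2`, every
maximal cherry-reduction sequence ends in a single vertex and its (unique) associated
cherry-picking sequence is tree-child. -/
theorem maximal_sequence_of_treeChild (R : DNet) (X : Finset ℕ) (Ns : ℕ → DNet)
    (rs : ℕ → Pick) (k : ℕ) (hR : IsRootedBinaryNet R X) (htc : R.TreeChild)
    (hX : 2 ≤ X.card) (h0 : Ns 0 = R) (hseq : RCherrySeq Ns rs k)
    (hmax : ∀ a b, ¬ RCherry (Ns k) a b ∧ ¬ RRetCherry (Ns k) a b) :
    (Ns k).SingleVertex ∧ TreeChildSeq rs k :=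
  maximal_sequence_of_treeChild' R X Ns rs k hR htc hX h0 hseq hmax
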